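/- arXiv:2211.05005 — 4 statements merged into one kernel-verified Lean document; each statement's English description precedes it below -/
import Mathlib

section
/- Let T ~ PB(p_1,…,p_n) be a Poisson binomial random variable, write q_i = 1−p_i so that stddev[T] = sqrt(Σ_{i=1}^n p_i q_i), and let X be an exponential random variable independent of T whose mean E[X] is at least max(1, stddev[T]). Fix θ ∈ ℝ and let B be the event that T + X > θn, and assume Pr[B] < 1/4. Then there is a universal constant C > 0 (independent of n, the p_i, θ and the law of X) such that the chi-squared distance between the conditional distribution of T given the complement of B and the distribution of T satisfies d_{χ²}((T | not B), T) ≤ C · (Pr[B] · stddev[T] / E[X])². -/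
open scoped BigOperators

/-- Probability mass function of the Poisson binomial distribution `PB(p₁,…,pₙ)`:
`Pr[T = t] = ∑_{S ⊆ [n], |S| = t} ∏_{i ∈ S} pᵢ ∏_{i ∉ S} (1 - pᵢ)`. -/
noncomputable def pbPMF (n : ℕ) (p : Fin n → ℝ) (t : ℕ) : ℝ :=
  ∑ s ∈ Finset.powersetCard t (Finset.univ : Finset (Fin n)),
    (∏ i ∈ s, p i) * ∏ i ∈ sᶜ, (1 - p i)

/-- Standard deviation of `PB(p₁,…,pₙ)`: `sqrt (∑ pᵢ (1 - pᵢ))`. -/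
noncomputable def pbStddev (n : ℕ) (p : Fin n → ℝ) : ℝ :=
  Real.sqrt (∑ i, p i * (1 - p i))

/-- Survival function of an exponential random variable `X ≥ 0` with rate `lam`
(mean `1/lam`): `Pr(X > s) = min 1 (exp (-lam * s))`. -/
noncomputable def expSurv (lam s : ℝ) : ℝ :=
  min 1 (Real.exp (-(lam * s)))

/-- `Pr(T + X > θ·n)` for `T ~ PB(p)` and `X` exponential with rate `lam`,
independent of `T`. -/
noncomputable def prExceed (n : ℕ) (p : Fin n → ℝ) (lam θ : ℝ) : ℝ :=
  ∑ t ∈ Finset.range (n + 1), pbPMF n p t * expSurv lam (θ * n - t)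

section Aux
open Finset

lemma step_ineq (pj A0 A1 B0 B1 Pi lam : ℝ) (hp0 : 0 ≤ pj) (hp1 : pj ≤ 1)
    (hl0 : 0 ≤ lam) (hl1 : lam ≤ 1) (hA0 : 0 ≤ A0) (h01 : A0 ≤ A1)
    (h1e : A1 ≤ Real.exp lam * A0) (hPi : 0 ≤ Pi)
    (hB0 : B0 ≤ A0 ^ 2 * Pi) (hB1 : B1 ≤ A1 ^ 2 * Pi) :
    (1 - pj) * B0 + pj * B1
      ≤ ((1 - pj) * A0 + pj * A1) ^ 2 * ((1 + Real.exp 2 * (pj * (1 - pj)) * lam ^ 2) * Pi) := by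
  have hq0 : 0 ≤ 1 - pj := by linarith
  have hexp2 : Real.exp 2 = Real.exp 1 * Real.exp 1 := by
    rw [← Real.exp_add]; norm_num
  have hee : Real.exp lam ≤ Real.exp 1 := Real.exp_le_exp.mpr hl1
  have hone : Real.exp (-lam) * Real.exp lam = 1 := by
    rw [← Real.exp_add]; simp
  have hlam1 : Real.exp lam - 1 ≤ lam * Real.exp lam := by
    nlinarith [Real.add_one_le_exp (-lam), Real.exp_pos lam]
  set M := (1 - pj) * A0 + pj * A1 with hM
  have hA0M : A0 ≤ M := by nlinarith
  have hMnn : 0 ≤ M := le_trans hA0 hA0M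
  have hdiff : A1 - A0 ≤ Real.exp 1 * lam * M := by
    have h1 : A1 - A0 ≤ (Real.exp lam - 1) * A0 := by nlinarith
    have h2 : (Real.exp lam - 1) * A0 ≤ lam * Real.exp lam * A0 := by nlinarith
    have h3 : lam * Real.exp lam * A0 ≤ Real.exp 1 * lam * M := by
      have e1 : lam * Real.exp lam * A0 ≤ lam * Real.exp 1 * A0 :=
        mul_le_mul_of_nonneg_right (mul_le_mul_of_nonneg_left hee hl0) hA0
      have e2 : lam * Real.exp 1 * A0 ≤ lam * Real.exp 1 * M :=
        mul_le_mul_of_nonneg_left hA0M (mul_nonneg hl0 (Real.exp_pos 1).le)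
      nlinarith
    linarith
  have hdsq : (A1 - A0) ^ 2 ≤ Real.exp 2 * lam ^ 2 * M ^ 2 := by
    rw [hexp2]
    nlinarith [mul_nonneg (mul_nonneg (Real.exp_pos 1).le hl0) hMnn]
  have k4 : pj * (1 - pj) * (A1 - A0) ^ 2 ≤ Real.exp 2 * (pj * (1 - pj)) * lam ^ 2 * M ^ 2 := by
    nlinarith [mul_nonneg hp0 hq0]
  have k2 : (1 - pj) * B0 + pj * B1 ≤ ((1 - pj) * A0 ^ 2 + pj * A1 ^ 2) * Pi := by
    have := mul_le_mul_of_nonneg_left hB0 hq0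
    have := mul_le_mul_of_nonneg_left hB1 hp0
    nlinarith
  have k3 : (1 - pj) * A0 ^ 2 + pj * A1 ^ 2 = M ^ 2 + pj * (1 - pj) * (A1 - A0) ^ 2 := by
    rw [hM]; ring
  calc (1 - pj) * B0 + pj * B1 ≤ ((1 - pj) * A0 ^ 2 + pj * A1 ^ 2) * Pi := k2
    _ = (M ^ 2 + pj * (1 - pj) * (A1 - A0) ^ 2) * Pi := by rw [k3]
    _ ≤ (M ^ 2 + Real.exp 2 * (pj * (1 - pj)) * lam ^ 2 * M ^ 2) * Pi :=
        mul_le_mul_of_nonneg_right (by linarith) hPi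
    _ = M ^ 2 * ((1 + Real.exp 2 * (pj * (1 - pj)) * lam ^ 2) * Pi) := by ring

lemma key_lemma {ι : Type*} [DecidableEq ι] (p : ι → ℝ) (hp : ∀ i, 0 ≤ p i ∧ p i ≤ 1)
    (lam : ℝ) (hl0 : 0 ≤ lam) (hl1 : lam ≤ 1) (s : Finset ι) :
    ∀ (φ : ℕ → ℝ), (∀ t, φ t ≤ φ (t+1)) → (∀ t, φ (t+1) ≤ φ t + 1) →
    (∑ S ∈ s.powerset, ((∏ i ∈ S, p i) * ∏ i ∈ s \ S, (1 - p i)) * Real.exp (2*(lam * φ S.card)))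
      ≤ (∑ S ∈ s.powerset, ((∏ i ∈ S, p i) * ∏ i ∈ s \ S, (1 - p i)) * Real.exp (lam * φ S.card))^2
        * ∏ i ∈ s, (1 + Real.exp 2 * (p i * (1 - p i)) * lam^2) := by
  classical
  induction s using Finset.induction_on with
  | empty =>
      intro φ _ _
      simp only [Finset.powerset_empty, Finset.sum_singleton, Finset.prod_empty,
        Finset.card_empty, Finset.sdiff_empty, one_mul, mul_one]
      rw [sq, ← Real.exp_add]
      exact le_of_eq (by ring_nf)
  | insert j s hj ih =>
      intro φ hmono hlip
      have hjP : ∀ S ∈ s.powerset, j ∉ S := fun S hS => fun hc => hj (mem_powerset.mp hS hc)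
      -- split sums over powerset of insert
      have hdisj : Disjoint s.powerset (s.powerset.image (insert j)) := by
        rw [Finset.disjoint_left]
        intro A hA hA'
        obtain ⟨B, hB, hBA⟩ := Finset.mem_image.mp hA'
        exact hjP A hA (hBA ▸ Finset.mem_insert_self j B)
      have hinj : ∀ x ∈ s.powerset, ∀ y ∈ s.powerset, insert j x = insert j y → x = y := by
        intro x hx y hy h
        have := congrArg (fun z => Finset.erase z j) h
        simpa [Finset.erase_insert (hjP x hx), Finset.erase_insert (hjP y hy)] using this
      have hsplit : ∀ f : Finset ι → ℝ,
          ∑ S ∈ (insert j s).powerset, f S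
            = ∑ S ∈ s.powerset, f S + ∑ S ∈ s.powerset, f (insert j S) := by
        intro f
        rw [Finset.powerset_insert, Finset.sum_union hdisj, Finset.sum_image hinj]
      -- rewrite the two pieces
      have hsd1 : ∀ S ∈ s.powerset, (insert j s) \ S = insert j (s \ S) := by
        intro S hS
        ext a
        simp only [Finset.mem_sdiff, Finset.mem_insert]
        constructor
        · rintro ⟨h1 | h1, h2⟩
          · exact Or.inl h1
          · exact Or.inr ⟨h1, h2⟩
        · rintro (rfl | ⟨h1, h2⟩)
          · exact ⟨Or.inl rfl, hjP S hS⟩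
          · exact ⟨Or.inr h1, h2⟩
      have hsd2 : ∀ S ∈ s.powerset, (insert j s) \ (insert j S) = s \ S := by
        intro S hS
        ext a
        simp only [Finset.mem_sdiff, Finset.mem_insert, not_or]
        constructor
        · rintro ⟨h1 | h1, h2, h3⟩
          · exact absurd h1 h2
          · exact ⟨h1, h3⟩
        · rintro ⟨h1, h2⟩
          exact ⟨Or.inr h1, fun hc => hj (hc ▸ h1), h2⟩
      have hterm1 : ∀ (E : ℕ → ℝ) (S : Finset ι), S ∈ s.powerset →
          ((∏ i ∈ S, p i) * ∏ i ∈ (insert j s) \ S, (1 - p i)) * E S.card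
          = (1 - p j) * (((∏ i ∈ S, p i) * ∏ i ∈ s \ S, (1 - p i)) * E S.card) := by
        intro E S hS
        rw [hsd1 S hS, Finset.prod_insert (fun hc => hj (Finset.mem_sdiff.mp hc).1)]
        ring
      have hterm2 : ∀ (E : ℕ → ℝ) (S : Finset ι), S ∈ s.powerset →
          ((∏ i ∈ insert j S, p i) * ∏ i ∈ (insert j s) \ (insert j S), (1 - p i))
              * E (insert j S).card
          = p j * (((∏ i ∈ S, p i) * ∏ i ∈ s \ S, (1 - p i)) * E (S.card + 1)) := by
        intro E S hS
        rw [hsd2 S hS, Finset.prod_insert (hjP S hS), Finset.card_insert_of_notMem (hjP S hS)]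
        ring
      have hwnn : ∀ S ∈ s.powerset, 0 ≤ (∏ i ∈ S, p i) * ∏ i ∈ s \ S, (1 - p i) := by
        intro S _
        exact mul_nonneg (Finset.prod_nonneg fun i _ => (hp i).1)
          (Finset.prod_nonneg fun i _ => by linarith [(hp i).2])
      have g2a := Finset.sum_congr rfl (hterm1 (fun t => Real.exp (2 * (lam * φ t))))
      have g2b := Finset.sum_congr rfl (hterm2 (fun t => Real.exp (2 * (lam * φ t))))
      have g1a := Finset.sum_congr rfl (hterm1 (fun t => Real.exp (lam * φ t)))
      have g1b := Finset.sum_congr rfl (hterm2 (fun t => Real.exp (lam * φ t)))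
      rw [hsplit, hsplit, g2a, g2b, g1a, g1b, ← Finset.mul_sum, ← Finset.mul_sum,
        ← Finset.mul_sum, ← Finset.mul_sum, Finset.prod_insert hj]
      have hA0nn : 0 ≤ ∑ S ∈ s.powerset,
          ((∏ i ∈ S, p i) * ∏ i ∈ s \ S, (1 - p i)) * Real.exp (lam * φ S.card) :=
        Finset.sum_nonneg fun S hS => mul_nonneg (hwnn S hS) (Real.exp_pos _).le
      have hA01 : (∑ S ∈ s.powerset,
            ((∏ i ∈ S, p i) * ∏ i ∈ s \ S, (1 - p i)) * Real.exp (lam * φ S.card))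
          ≤ ∑ S ∈ s.powerset,
            ((∏ i ∈ S, p i) * ∏ i ∈ s \ S, (1 - p i)) * Real.exp (lam * φ (S.card + 1)) :=
        Finset.sum_le_sum fun S hS => mul_le_mul_of_nonneg_left
          (Real.exp_le_exp.mpr (mul_le_mul_of_nonneg_left (hmono _) hl0)) (hwnn S hS)
      have hA1e : (∑ S ∈ s.powerset,
            ((∏ i ∈ S, p i) * ∏ i ∈ s \ S, (1 - p i)) * Real.exp (lam * φ (S.card + 1)))
          ≤ Real.exp lam * ∑ S ∈ s.powerset,
            ((∏ i ∈ S, p i) * ∏ i ∈ s \ S, (1 - p i)) * Real.exp (lam * φ S.card) := by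
        rw [Finset.mul_sum]
        refine Finset.sum_le_sum fun S hS => ?_
        rw [mul_left_comm]
        refine mul_le_mul_of_nonneg_left ?_ (hwnn S hS)
        rw [← Real.exp_add]
        refine Real.exp_le_exp.mpr ?_
        have h1 := hlip S.card
        nlinarith
      have hPinn : 0 ≤ ∏ i ∈ s, (1 + Real.exp 2 * (p i * (1 - p i)) * lam ^ 2) :=
        Finset.prod_nonneg fun i _ => by
          have h := mul_nonneg (mul_nonneg (Real.exp_pos 2).le
            (mul_nonneg (hp i).1 (by linarith [(hp i).2] : (0:ℝ) ≤ 1 - p i))) (sq_nonneg lam)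
          linarith
      exact step_ineq (p j) _ _ _ _ _ lam (hp j).1 (hp j).2 hl0 hl1 hA0nn hA01 hA1e hPinn
        (ih φ hmono hlip) (ih (fun t => φ (t + 1)) (fun t => hmono (t + 1)) (fun t => hlip (t + 1)))


lemma bridge (n : ℕ) (p : Fin n → ℝ) (F : ℕ → ℝ) :
    ∑ S ∈ (Finset.univ : Finset (Fin n)).powerset,
        ((∏ i ∈ S, p i) * ∏ i ∈ Finset.univ \ S, (1 - p i)) * F S.card
      = ∑ t ∈ Finset.range (n + 1), pbPMF n p t * F t := by
  have hmap : ∀ S ∈ (Finset.univ : Finset (Fin n)).powerset, S.card ∈ Finset.range (n + 1) :=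
    fun S _ => Finset.mem_range.mpr (Nat.lt_succ_of_le (le_trans (Finset.card_le_univ S) (by simp)))
  rw [← Finset.sum_fiberwise_of_maps_to hmap
    (fun S => ((∏ i ∈ S, p i) * ∏ i ∈ Finset.univ \ S, (1 - p i)) * F S.card)]
  refine Finset.sum_congr rfl fun t _ => ?_
  rw [pbPMF, Finset.sum_mul, Finset.powersetCard_eq_filter]
  refine Finset.sum_congr rfl fun S hS => ?_
  rw [(Finset.mem_filter.mp hS).2, Finset.compl_eq_univ_sdiff]

lemma pb_sum_one (n : ℕ) (p : Fin n → ℝ) :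
    ∑ t ∈ Finset.range (n + 1), pbPMF n p t = 1 := by
  have h := bridge n p (fun _ => 1)
  simp only [mul_one] at h
  rw [← h, ← Finset.prod_add]
  simp

lemma pb_nonneg (n : ℕ) (p : Fin n → ℝ) (hp : ∀ i, 0 ≤ p i ∧ p i ≤ 1) (t : ℕ) :
    0 ≤ pbPMF n p t :=
  Finset.sum_nonneg fun S _ => mul_nonneg (Finset.prod_nonneg fun i _ => (hp i).1)
    (Finset.prod_nonneg fun i _ => by linarith [(hp i).2])
end Aux

/-- **Gentle classical measurement on the Poisson binomial distribution.**
Let `T ~ PB(p₁,…,pₙ)`, and let `X` be an independent exponential random variable whose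
mean `1/lam` is at least `1` and at least `stddev[T]`.  Let `B` be the event
`T + X > θ·n` and assume `Pr[B] < 1/4`.  Then there is a universal constant `C > 0`
(independent of `n`, the `pᵢ`, `θ` and the rate `lam` of `X`) such that
`d_{χ²}((T | ¬B), T) ≤ C · (Pr[B] · stddev[T] / E[X])²`.
Here the conditional law of `T` given `¬B` has mass function
`t ↦ pb(t) · Pr(X ≤ θn - t) / Pr[¬B]`, and χ²-distance is
`d_{χ²}(P,Q) = ∑_t Q(t) (1 - P(t)/Q(t))²`, the sum running over the support
`{0,…,n}` of `T`;  note `stddev[T]/E[X] = stddev[T] · lam`. -/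
theorem gentle_measurement_poisson_binomial :
    ∃ C : ℝ, 0 < C ∧
      ∀ (n : ℕ) (p : Fin n → ℝ) (θ lam : ℝ),
        (∀ i, 0 ≤ p i ∧ p i ≤ 1) →
        0 < lam → lam ≤ 1 → lam * pbStddev n p ≤ 1 →
        prExceed n p lam θ < 1 / 4 →
        (∑ t ∈ Finset.range (n + 1),
            pbPMF n p t *
              (1 - (pbPMF n p t * (1 - expSurv lam (θ * n - t)) /
                      (1 - prExceed n p lam θ)) / pbPMF n p t) ^ 2)
          ≤ C * (prExceed n p lam θ * pbStddev n p * lam) ^ 2 := by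
  refine ⟨2 * (Real.exp 2 * Real.exp (Real.exp 2)), by positivity, ?_⟩
  intro n p θ lam hp hl0 hl1 hls hβ
  set β := prExceed n p lam θ with hβdef
  have hqnn := pb_nonneg n p hp
  have hsurv01 : ∀ t : ℕ, 0 ≤ expSurv lam (θ * n - t) ∧ expSurv lam (θ * n - t) ≤ 1 :=
    fun t => ⟨le_min zero_le_one (Real.exp_pos _).le, min_le_left _ _⟩
  have hβnn : 0 ≤ β := by
    rw [hβdef, prExceed]
    exact Finset.sum_nonneg fun t _ => mul_nonneg (hqnn t) (hsurv01 t).1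
  have h1β : (0:ℝ) < 1 - β := by linarith
  set φ : ℕ → ℝ := fun t => min ((t : ℝ) - θ * n) 0 with hφdef
  have hφmono : ∀ t, φ t ≤ φ (t + 1) := by
    intro t
    simp only [hφdef]
    refine min_le_min ?_ le_rfl
    push_cast
    linarith
  have hφlip : ∀ t, φ (t + 1) ≤ φ t + 1 := by
    intro t
    simp only [hφdef]
    have h1 : min ((t : ℝ) - θ * n) 0 + 1 = min ((t : ℝ) - θ * n + 1) (0 + 1) :=
      (min_add_add_right _ _ _).symm
    rw [h1]
    exact min_le_min (by push_cast; linarith) (by linarith)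
  have hs : ∀ t : ℕ, expSurv lam (θ * n - t) = Real.exp (lam * φ t) := by
    intro t
    simp only [expSurv, hφdef]
    rw [show -(lam * (θ * (n:ℝ) - (t:ℝ))) = lam * ((t:ℝ) - θ * n) by ring,
      mul_min_of_nonneg _ _ hl0.le, mul_zero, Real.exp_monotone.map_min, Real.exp_zero,
      min_comm]
  have hsq : ∀ t : ℕ, expSurv lam (θ * n - t) ^ 2 = Real.exp (2 * (lam * φ t)) := by
    intro t
    rw [hs t, sq, ← Real.exp_add]
    exact congrArg Real.exp (by ring)
  have hb2 := bridge n p (fun t => Real.exp (2 * (lam * φ t)))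
  have hb1 := bridge n p (fun t => Real.exp (lam * φ t))
  have hkey := key_lemma p hp lam hl0.le hl1 Finset.univ φ hφmono hφlip
  rw [hb2, hb1] at hkey
  have hβ1 : ∑ t ∈ Finset.range (n + 1), pbPMF n p t * Real.exp (lam * φ t) = β := by
    rw [hβdef, prExceed]
    exact Finset.sum_congr rfl fun t _ => by rw [hs t]
  rw [hβ1] at hkey
  set σ2 := ∑ i, p i * (1 - p i) with hσ2def
  have hσ2nn : 0 ≤ σ2 := by
    rw [hσ2def]
    exact Finset.sum_nonneg fun i _ => mul_nonneg (hp i).1 (by linarith [(hp i).2])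
  have hstd : pbStddev n p ^ 2 = σ2 := by
    simp only [pbStddev]
    rw [hσ2def]
    exact Real.sq_sqrt (hσ2def ▸ hσ2nn)
  have hstdnn : 0 ≤ pbStddev n p := by
    simp only [pbStddev]; exact Real.sqrt_nonneg _
  have hVle : lam ^ 2 * σ2 ≤ 1 := by
    have h1 : lam ^ 2 * σ2 = (lam * pbStddev n p) ^ 2 := by rw [mul_pow, hstd]
    rw [h1]
    nlinarith [mul_nonneg hl0.le hstdnn, hls]
  have hPibd : (∏ i, (1 + Real.exp 2 * (p i * (1 - p i)) * lam ^ 2))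
      ≤ 1 + Real.exp 2 * Real.exp (Real.exp 2) * (lam ^ 2 * σ2) := by
    have h1 : (∏ i, (1 + Real.exp 2 * (p i * (1 - p i)) * lam ^ 2))
        ≤ ∏ i, Real.exp (Real.exp 2 * (p i * (1 - p i)) * lam ^ 2) := by
      refine Finset.prod_le_prod (fun i _ => ?_) (fun i _ => ?_)
      · have h := mul_nonneg (mul_nonneg (Real.exp_pos 2).le
          (mul_nonneg (hp i).1 (by linarith [(hp i).2] : (0:ℝ) ≤ 1 - p i))) (sq_nonneg lam)
        linarith
      · linarith [Real.add_one_le_exp (Real.exp 2 * (p i * (1 - p i)) * lam ^ 2)]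
    have h2 : (∏ i, Real.exp (Real.exp 2 * (p i * (1 - p i)) * lam ^ 2))
        = Real.exp (Real.exp 2 * (lam ^ 2 * σ2)) := by
      rw [← Real.exp_sum]
      congr 1
      rw [hσ2def, Finset.mul_sum, Finset.mul_sum]
      exact Finset.sum_congr rfl fun i _ => by ring
    have hynn : 0 ≤ Real.exp 2 * (lam ^ 2 * σ2) :=
      mul_nonneg (Real.exp_pos 2).le (mul_nonneg (sq_nonneg lam) hσ2nn)
    have hyle : Real.exp 2 * (lam ^ 2 * σ2) ≤ Real.exp 2 := by
      have := mul_le_mul_of_nonneg_left hVle (Real.exp_pos 2).le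
      linarith
    have h3 : Real.exp (Real.exp 2 * (lam ^ 2 * σ2))
        ≤ 1 + Real.exp 2 * (lam ^ 2 * σ2) * Real.exp (Real.exp 2) := by
      set y := Real.exp 2 * (lam ^ 2 * σ2) with hy
      have ha := Real.add_one_le_exp (-y)
      have hb : Real.exp (-y) * Real.exp y = 1 := by rw [← Real.exp_add]; simp
      have hc : Real.exp y ≤ Real.exp (Real.exp 2) := Real.exp_le_exp.mpr hyle
      nlinarith [Real.exp_pos y, mul_le_mul_of_nonneg_right ha (Real.exp_pos y).le,
        mul_le_mul_of_nonneg_left hc hynn]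
    calc (∏ i, (1 + Real.exp 2 * (p i * (1 - p i)) * lam ^ 2))
        ≤ Real.exp (Real.exp 2 * (lam ^ 2 * σ2)) := h1.trans (le_of_eq h2)
      _ ≤ 1 + Real.exp 2 * (lam ^ 2 * σ2) * Real.exp (Real.exp 2) := h3
      _ = 1 + Real.exp 2 * Real.exp (Real.exp 2) * (lam ^ 2 * σ2) := by ring
  have hE2b : (∑ t ∈ Finset.range (n + 1), pbPMF n p t * expSurv lam (θ * n - t) ^ 2)
      ≤ β ^ 2 * (1 + Real.exp 2 * Real.exp (Real.exp 2) * (lam ^ 2 * σ2)) := by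
    calc (∑ t ∈ Finset.range (n + 1), pbPMF n p t * expSurv lam (θ * n - t) ^ 2)
        = ∑ t ∈ Finset.range (n + 1), pbPMF n p t * Real.exp (2 * (lam * φ t)) :=
          Finset.sum_congr rfl fun t _ => by rw [hsq t]
      _ ≤ β ^ 2 * ∏ i, (1 + Real.exp 2 * (p i * (1 - p i)) * lam ^ 2) := hkey
      _ ≤ β ^ 2 * (1 + Real.exp 2 * Real.exp (Real.exp 2) * (lam ^ 2 * σ2)) :=
          mul_le_mul_of_nonneg_left hPibd (sq_nonneg β)
  have hterm : ∀ t ∈ Finset.range (n + 1),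
      pbPMF n p t * (1 - (pbPMF n p t * (1 - expSurv lam (θ * n - t)) / (1 - β)) /
        pbPMF n p t) ^ 2
      = pbPMF n p t * (expSurv lam (θ * n - t) - β) ^ 2 / (1 - β) ^ 2 := by
    intro t _
    by_cases hq : pbPMF n p t = 0
    · simp [hq]
    · field_simp
      ring
  rw [Finset.sum_congr rfl hterm, ← Finset.sum_div]
  have hvar : (∑ t ∈ Finset.range (n + 1),
        pbPMF n p t * (expSurv lam (θ * n - t) - β) ^ 2)
      = (∑ t ∈ Finset.range (n + 1), pbPMF n p t * expSurv lam (θ * n - t) ^ 2) - β ^ 2 := by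
    have expand : ∀ t ∈ Finset.range (n + 1),
        pbPMF n p t * (expSurv lam (θ * n - t) - β) ^ 2
          = pbPMF n p t * expSurv lam (θ * n - t) ^ 2
            - 2 * β * (pbPMF n p t * expSurv lam (θ * n - t)) + β ^ 2 * pbPMF n p t :=
      fun t _ => by ring
    rw [Finset.sum_congr rfl expand, Finset.sum_add_distrib, Finset.sum_sub_distrib,
      ← Finset.mul_sum, ← Finset.mul_sum, pb_sum_one]
    have hsum : (∑ t ∈ Finset.range (n + 1), pbPMF n p t * expSurv lam (θ * n - t)) = β := by
      rw [hβdef, prExceed]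
    rw [hsum]
    ring
  rw [hvar, div_le_iff₀ (by positivity : (0:ℝ) < (1 - β) ^ 2)]
  have hσexp : (β * pbStddev n p * lam) ^ 2 = β ^ 2 * σ2 * lam ^ 2 := by
    rw [mul_pow, mul_pow, hstd]
  rw [hσexp]
  have h916 : (9:ℝ)/16 ≤ (1 - β) ^ 2 := by nlinarith
  have hDnn : 0 ≤ Real.exp 2 * Real.exp (Real.exp 2) := by positivity
  have hYnn : 0 ≤ β ^ 2 * σ2 * lam ^ 2 :=
    mul_nonneg (mul_nonneg (sq_nonneg β) hσ2nn) (sq_nonneg lam)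
  nlinarith [hE2b, mul_le_mul_of_nonneg_left h916
      (mul_nonneg (mul_nonneg (by norm_num : (0:ℝ) ≤ 2) hDnn) hYnn),
    mul_nonneg hDnn hYnn]
end

section
/- Fix 0 ≤ θ ≤ 1, a nonnegative real random variable X, d×d density matrices ρ_1,…,ρ_n, and d×d orthogonal projections Π_1,…,Π_n. Let p_i = Tr(ρ_i Π_i), let T ~ PB(p_1,…,p_n) be the associated Poisson binomial random variable, independent of X, and assume Pr(T + X ≤ θn) > 0. Then there exists an operator B on (ℂ^d)^{⊗n} with 0 ≤ B ≤ I such that, with ϱ = ρ_1 ⊗ … ⊗ ρ_n: (i) Tr(ϱB) = Pr(T + X > θn), and (ii) the fidelity between ϱ and the post-measurement state ϱ|_{√(I−B)} = √(I−B) ϱ √(I−B) / Tr(ϱ(I−B)) equals the Bhattacharyya coefficient BC((T | T + X ≤ θn), T) between the conditional law of T given T + X ≤ θn and the law of T. -/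
open scoped BigOperators ComplexOrder Matrix Classical
open Matrix

section MatrixDefs

variable {m : Type*} [Fintype m] [DecidableEq m]

/-- Square root of a positive semidefinite matrix (junk value `0` otherwise). -/
noncomputable def matSqrt (A : Matrix m m ℂ) : Matrix m m ℂ :=
  if h : A.PosSemidef then
    (h.1.eigenvectorUnitary : Matrix m m ℂ) *
      diagonal ((↑) ∘ Real.sqrt ∘ h.1.eigenvalues) *
      (star h.1.eigenvectorUnitary : Matrix m m ℂ)
  else 0

/-- A density matrix: positive semidefinite with unit trace. -/
def IsDensityMatrix (ρ : Matrix m m ℂ) : Prop :=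
  ρ.PosSemidef ∧ ρ.trace = 1

/-- An orthogonal projection: Hermitian and idempotent. -/
def IsProjectionMatrix (P : Matrix m m ℂ) : Prop :=
  P.IsHermitian ∧ P * P = P

/-- Fidelity `F(ρ,σ) = Tr √(√ρ σ √ρ)`. -/
noncomputable def fidelity (ρ σ : Matrix m m ℂ) : ℝ :=
  (matSqrt (matSqrt ρ * σ * matSqrt ρ)).trace.re

/-- Post-measurement state `ϱ|_{√E} = √E ϱ √E / Tr(ϱ E)`. -/
noncomputable def postState (ϱ E : Matrix m m ℂ) : Matrix m m ℂ :=
  (Matrix.trace (matSqrt E * ϱ * matSqrt E))⁻¹ • (matSqrt E * ϱ * matSqrt E)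

end MatrixDefs

/-- `n`-fold tensor product `ρ₁ ⊗ ⋯ ⊗ ρₙ` of `d × d` matrices,
realized on the index set `Fin n → Fin d`. -/
noncomputable def tensorState {n d : ℕ} (ρ : Fin n → Matrix (Fin d) (Fin d) ℂ) :
    Matrix (Fin n → Fin d) (Fin n → Fin d) ℂ :=
  Matrix.of fun f g => ∏ i, ρ i (f i) (g i)

/-- `Pr(T + X > θ·n)` where `T ~ PB(p)` and `X` is an independent random variable
with law `μ`. -/
noncomputable def prExceedLaw (n : ℕ) (p : Fin n → ℝ) (μ : MeasureTheory.Measure ℝ)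
    (θ : ℝ) : ℝ :=
  ∑ t ∈ Finset.range (n + 1), pbPMF n p t * (μ (Set.Ioi (θ * n - t))).toReal

/-- `Pr(T + X ≤ θ·n)` where `T ~ PB(p)` and `X` is an independent random variable
with law `μ`. -/
noncomputable def prAtMostLaw (n : ℕ) (p : Fin n → ℝ) (μ : MeasureTheory.Measure ℝ)
    (θ : ℝ) : ℝ :=
  ∑ t ∈ Finset.range (n + 1), pbPMF n p t * (μ (Set.Iic (θ * n - t))).toReal

/-- The Bhattacharyya coefficient `BC((T | T + X ≤ θn), T)` between the conditional
law of `T ~ PB(p)` given `T + X ≤ θn` and the law of `T`. -/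
noncomputable def bcCond (n : ℕ) (p : Fin n → ℝ) (μ : MeasureTheory.Measure ℝ)
    (θ : ℝ) : ℝ :=
  ∑ t ∈ Finset.range (n + 1),
    Real.sqrt ((pbPMF n p t * (μ (Set.Iic (θ * n - t))).toReal / prAtMostLaw n p μ θ) *
      pbPMF n p t)

section AuxLemmas

open scoped MatrixOrder in
set_option linter.unusedSectionVars false in
lemma matSqrt_eq_cfc {m : Type*} [Fintype m] [DecidableEq m] {A : Matrix m m ℂ}
    (hA : A.PosSemidef) : matSqrt A = CFC.sqrt A := by
  rw [matSqrt, dif_pos hA, CFC.sqrt_eq_cfc, cfc_nnreal_eq_real _ A, hA.1.cfc_eq]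
  simp only [IsHermitian.cfc, Unitary.conjStarAlgAut_apply]
  congr 3
  funext i
  simp [Real.coe_sqrt, Real.coe_toNNReal', max_eq_left (hA.eigenvalues_nonneg i)]

open scoped MatrixOrder in
set_option linter.unusedSectionVars false in
lemma matSqrt_eq {m : Type*} [Fintype m] [DecidableEq m] {A C : Matrix m m ℂ}
    (hC : C.PosSemidef) (h : C ^ 2 = A) : matSqrt A = C := by
  have hA : A.PosSemidef := h ▸ hC.pow 2
  rw [matSqrt_eq_cfc hA]
  exact CFC.sqrt_unique (by rw [← sq, h]) hC.nonneg

open scoped MatrixOrder in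
set_option linter.unusedSectionVars false in
lemma matSqrt_spec {m : Type*} [Fintype m] [DecidableEq m] {A : Matrix m m ℂ}
    (hA : A.PosSemidef) : (matSqrt A).PosSemidef ∧ matSqrt A ^ 2 = A := by
  rw [matSqrt_eq_cfc hA]; exact ⟨(CFC.sqrt_nonneg A).posSemidef, CFC.sq_sqrt A hA.nonneg⟩

lemma psd_trace_nonneg {m : Type*} [Fintype m] {A : Matrix m m ℂ}
    (hA : A.PosSemidef) : 0 ≤ A.trace := by
  refine Finset.sum_nonneg fun i _ => ?_
  exact hA.diag_nonneg

lemma psd_smul_real {m : Type*} [Fintype m] {A : Matrix m m ℂ} (hA : A.PosSemidef) {r : ℝ}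
    (hr : 0 ≤ r) : ((r : ℂ) • A).PosSemidef := by
  constructor
  · unfold Matrix.IsHermitian
    rw [Matrix.conjTranspose_smul, hA.1.eq]
    congr 1
    simp [Complex.ext_iff]
  · intro x
    exact (hA.smul (a := (r : ℂ)) (by exact_mod_cast Complex.zero_le_real.mpr hr)).2 x

lemma psd_sum {m : Type*} [Fintype m] {ι : Type*} (s : Finset ι) (f : ι → Matrix m m ℂ)
    (h : ∀ i ∈ s, (f i).PosSemidef) : (∑ i ∈ s, f i).PosSemidef := by
  classical
  induction s using Finset.induction with
  | empty => simpa using Matrix.PosSemidef.zero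
  | @insert x s hx ih =>
    rw [Finset.sum_insert hx]
    exact (h _ (Finset.mem_insert_self _ _)).add
      (ih fun i hi => h i (Finset.mem_insert_of_mem hi))

section Traces
variable {m : Type*} [Fintype m] [DecidableEq m]
set_option linter.unusedSectionVars false

lemma trace_mul_proj_nonneg {ρ Q : Matrix m m ℂ} (hρ : ρ.PosSemidef)
    (hQ : IsProjectionMatrix Q) : 0 ≤ (ρ * Q).trace := by
  have h : (ρ * Q).trace = (Qᴴ * ρ * Q).trace := by
    rw [hQ.1.eq]
    conv_lhs => rw [← hQ.2, ← mul_assoc]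
    rw [Matrix.trace_mul_cycle]
  rw [h]
  exact psd_trace_nonneg (hρ.conjTranspose_mul_mul_same Q)

lemma trace_mul_proj_real {ρ Q : Matrix m m ℂ} (hρ : ρ.PosSemidef)
    (hQ : IsProjectionMatrix Q) : (ρ * Q).trace = (((ρ * Q).trace.re : ℝ) : ℂ) := by
  have h := trace_mul_proj_nonneg hρ hQ
  rw [Complex.nonneg_iff] at h
  exact Complex.ext rfl (by simpa using h.2.symm)

lemma proj_compl {Q : Matrix m m ℂ} (hQ : IsProjectionMatrix Q) :
    IsProjectionMatrix (1 - Q) := by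
  refine ⟨Matrix.isHermitian_one.sub hQ.1, ?_⟩
  rw [sub_mul, one_mul, mul_sub, mul_one, hQ.2]
  abel

lemma trace_mul_proj_le_one {ρ Q : Matrix m m ℂ} (hρ : IsDensityMatrix ρ)
    (hQ : IsProjectionMatrix Q) : (ρ * Q).trace.re ≤ 1 := by
  have h := trace_mul_proj_nonneg hρ.1 (proj_compl hQ)
  rw [mul_sub, mul_one, Matrix.trace_sub, hρ.2, Complex.nonneg_iff] at h
  have := h.1
  simpa using this

lemma trace_mul_proj_re_nonneg {ρ Q : Matrix m m ℂ} (hρ : ρ.PosSemidef)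
    (hQ : IsProjectionMatrix Q) : 0 ≤ (ρ * Q).trace.re :=
  (Complex.nonneg_iff.mp (trace_mul_proj_nonneg hρ hQ)).1

lemma trace_mul_proj_compl {ρ Q : Matrix m m ℂ} (hρ : IsDensityMatrix ρ)
    (hQ : IsProjectionMatrix Q) :
    (ρ * (1 - Q)).trace = ((1 - (ρ * Q).trace.re : ℝ) : ℂ) := by
  rw [mul_sub, mul_one, Matrix.trace_sub, hρ.2]
  conv_lhs => rw [trace_mul_proj_real hρ.1 hQ]
  push_cast
  ring

end Traces

section Tensor
variable {n d : ℕ}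
set_option linter.unusedSectionVars false

lemma tensorState_mul (ρ σ : Fin n → Matrix (Fin d) (Fin d) ℂ) :
    tensorState ρ * tensorState σ = tensorState fun i => ρ i * σ i := by
  ext f g
  simp only [tensorState, Matrix.mul_apply, Matrix.of_apply]
  rw [Fintype.prod_sum]
  exact Finset.sum_congr rfl fun h _ => (Finset.prod_mul_distrib).symm

lemma tensorState_trace (ρ : Fin n → Matrix (Fin d) (Fin d) ℂ) :
    (tensorState ρ).trace = ∏ i, (ρ i).trace := by
  simp only [Matrix.trace, Matrix.diag, tensorState, Matrix.of_apply]
  rw [Fintype.prod_sum]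

lemma tensorState_conjTranspose (ρ : Fin n → Matrix (Fin d) (Fin d) ℂ) :
    (tensorState ρ)ᴴ = tensorState fun i => (ρ i)ᴴ := by
  ext f g
  simp [tensorState, Matrix.conjTranspose_apply, star_prod]

lemma tensorState_one : tensorState (fun _ : Fin n => (1 : Matrix (Fin d) (Fin d) ℂ)) = 1 := by
  ext f g
  simp only [tensorState, Matrix.of_apply, Matrix.one_apply]
  rw [Finset.prod_boole]
  simp [funext_iff]

lemma tensorState_eq_zero {ρ : Fin n → Matrix (Fin d) (Fin d) ℂ} (j : Fin n) (h : ρ j = 0) :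
    tensorState ρ = 0 := by
  ext f g
  simp only [tensorState, Matrix.of_apply, Matrix.zero_apply]
  exact Finset.prod_eq_zero (Finset.mem_univ j) (by simp [h])

lemma tensorState_posSemidef {ρ : Fin n → Matrix (Fin d) (Fin d) ℂ}
    (h : ∀ i, (ρ i).PosSemidef) : (tensorState ρ).PosSemidef := by
  choose B hB using fun i => (⟨matSqrt (ρ i), by
    rw [(matSqrt_spec (h i)).1.1.eq, ← sq, (matSqrt_spec (h i)).2]⟩ :
      ∃ B : Matrix (Fin d) (Fin d) ℂ, ρ i = Bᴴ * B)
  rw [show ρ = fun i => (B i)ᴴ * B i from funext hB, ← tensorState_mul,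
    ← tensorState_conjTranspose]
  exact Matrix.posSemidef_conjTranspose_mul_self _

end Tensor

/-- The family of commuting projections indexed by subsets. -/
noncomputable def projFam {n d : ℕ} (P : Fin n → Matrix (Fin d) (Fin d) ℂ)
    (S : Finset (Fin n)) : Matrix (Fin n → Fin d) (Fin n → Fin d) ℂ :=
  tensorState fun i => if i ∈ S then P i else 1 - P i

section ProjFam
variable {n d : ℕ} {P : Fin n → Matrix (Fin d) (Fin d) ℂ}
set_option linter.unusedSectionVars false

lemma projFam_herm (hP : ∀ i, IsProjectionMatrix (P i)) (S : Finset (Fin n)) :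
    (projFam P S).IsHermitian := by
  unfold Matrix.IsHermitian
  rw [projFam, tensorState_conjTranspose]
  have hfun : (fun i => (if i ∈ S then P i else 1 - P i)ᴴ)
      = fun i => if i ∈ S then P i else 1 - P i := by
    funext i
    by_cases h : i ∈ S <;>
      simp [h, (hP i).1.eq, (Matrix.isHermitian_one.sub (hP i).1).eq]
  rw [hfun]

lemma projFam_mul (hP : ∀ i, IsProjectionMatrix (P i)) (S T : Finset (Fin n)) :
    projFam P S * projFam P T = if S = T then projFam P S else 0 := by
  rw [projFam, projFam, tensorState_mul]
  split
  · next h =>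
    subst h
    have hfun : (fun i => (if i ∈ S then P i else 1 - P i) * if i ∈ S then P i else 1 - P i)
        = fun i => if i ∈ S then P i else 1 - P i := by
      funext i
      by_cases h : i ∈ S
      · simp [h, (hP i).2]
      · simp only [h, if_neg, if_false]
        rw [sub_mul, one_mul, mul_sub, mul_one, (hP i).2]
        abel
    rw [hfun]
  · next h =>
    have : ∃ j, ¬ (j ∈ S ↔ j ∈ T) := by
      by_contra hc
      push_neg at hc
      exact h (Finset.ext fun j => hc j)
    obtain ⟨j, hj⟩ := this
    refine tensorState_eq_zero j ?_
    by_cases h1 : j ∈ S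
    · have h2 : j ∉ T := fun h2 => hj ⟨fun _ => h2, fun _ => h1⟩
      simp only [h1, h2, if_pos, if_neg, if_false]
      rw [mul_sub, mul_one, (hP j).2, sub_self]
    · have h2 : j ∈ T := by
        by_contra h2
        exact hj ⟨fun h' => absurd h' h1, fun h' => absurd h' h2⟩
      simp only [h1, h2, if_pos, if_neg, if_false]
      rw [sub_mul, one_mul, (hP j).2, sub_self]

lemma projFam_psd (hP : ∀ i, IsProjectionMatrix (P i)) (S : Finset (Fin n)) :
    (projFam P S).PosSemidef := by
  have h := projFam_mul hP S S
  rw [if_pos rfl] at h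
  have hh := projFam_herm hP S
  simpa [hh.eq, h] using Matrix.posSemidef_conjTranspose_mul_self (projFam P S)

lemma prod_ite_mem_compl {α : Type*} [Fintype α] [DecidableEq α] {β : Type*} [CommMonoid β]
    (S : Finset α) (f g : α → β) :
    ∏ i, (if i ∈ S then f i else g i) = (∏ i ∈ S, f i) * ∏ i ∈ Sᶜ, g i := by
  rw [Finset.prod_ite, Finset.filter_univ_mem]
  congr 1
  apply Finset.prod_congr _ fun _ _ => rfl
  ext j; simp

lemma projFam_sum : ∑ S : Finset (Fin n), projFam P S = 1 := by
  ext f g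
  rw [← tensorState_one (n := n) (d := d)]
  simp only [Matrix.sum_apply, projFam, tensorState, Matrix.of_apply]
  have key : ∀ S : Finset (Fin n),
      (∏ i, (if i ∈ S then P i else 1 - P i) (f i) (g i))
        = (∏ i ∈ S, (P i) (f i) (g i)) * ∏ i ∈ Sᶜ, (1 - P i) (f i) (g i) := by
    intro S
    rw [← prod_ite_mem_compl]
    exact Finset.prod_congr rfl fun i _ => by
      exact (apply_ite (fun M : Matrix (Fin d) (Fin d) ℂ => M (f i) (g i)) _ _ _)
  calc ∑ S : Finset (Fin n), ∏ i, (if i ∈ S then P i else 1 - P i) (f i) (g i)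
      = ∑ S : Finset (Fin n), (∏ i ∈ S, (P i) (f i) (g i)) *
          ∏ i ∈ Sᶜ, (1 - P i) (f i) (g i) := Finset.sum_congr rfl fun S _ => key S
    _ = ∏ i, ((P i) (f i) (g i) + (1 - P i) (f i) (g i)) := (Fintype.prod_add _ _).symm
    _ = ∏ i, (1 : Matrix (Fin d) (Fin d) ℂ) (f i) (g i) := by
        refine Finset.prod_congr rfl fun i _ => ?_
        simp [Matrix.sub_apply]

lemma sum_smul_projFam_mul (hP : ∀ i, IsProjectionMatrix (P i))
    (x y : Finset (Fin n) → ℝ) :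
    (∑ S : Finset (Fin n), ((x S : ℝ) : ℂ) • projFam P S) *
      (∑ S : Finset (Fin n), ((y S : ℝ) : ℂ) • projFam P S)
      = ∑ S : Finset (Fin n), ((x S * y S : ℝ) : ℂ) • projFam P S := by
  rw [Finset.sum_mul_sum]
  refine Finset.sum_congr rfl fun S _ => ?_
  rw [Finset.sum_eq_single S]
  · rw [smul_mul_assoc, mul_smul_comm, smul_smul, projFam_mul hP, if_pos rfl]
    push_cast
    ring_nf
  · intro T _ hT
    rw [smul_mul_assoc, mul_smul_comm, projFam_mul hP, if_neg (Ne.symm hT)]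
    simp
  · intro h
    exact absurd (Finset.mem_univ S) h

lemma trace_tensor_projFam {ρ : Fin n → Matrix (Fin d) (Fin d) ℂ} {p : Fin n → ℝ}
    (hρ : ∀ i, IsDensityMatrix (ρ i)) (hP : ∀ i, IsProjectionMatrix (P i))
    (hp : ∀ i, p i = ((ρ i * P i).trace).re) (S : Finset (Fin n)) :
    (tensorState ρ * projFam P S).trace
      = (((∏ i ∈ S, p i) * ∏ i ∈ Sᶜ, (1 - p i) : ℝ) : ℂ) := by
  rw [projFam, tensorState_mul, tensorState_trace]
  have key : ∀ i : Fin n, (ρ i * if i ∈ S then P i else 1 - P i).trace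
      = if i ∈ S then ((p i : ℝ) : ℂ) else ((1 - p i : ℝ) : ℂ) := by
    intro i
    by_cases h : i ∈ S
    · rw [if_pos h, if_pos h, hp i]
      exact trace_mul_proj_real (hρ i).1 (hP i)
    · rw [if_neg h, if_neg h, hp i]
      exact trace_mul_proj_compl (hρ i) (hP i)
  calc ∏ i, (ρ i * if i ∈ S then P i else 1 - P i).trace
      = ∏ i, (if i ∈ S then ((p i : ℝ) : ℂ) else ((1 - p i : ℝ) : ℂ)) :=
        Finset.prod_congr rfl fun i _ => key i
    _ = (∏ i ∈ S, ((p i : ℝ) : ℂ)) * ∏ i ∈ Sᶜ, ((1 - p i : ℝ) : ℂ) :=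
        prod_ite_mem_compl S _ _
    _ = _ := by push_cast; ring

lemma sum_card_group (F : Finset (Fin n) → ℝ) :
    ∑ S : Finset (Fin n), F S
      = ∑ t ∈ Finset.range (n + 1), ∑ S ∈ Finset.powersetCard t Finset.univ, F S := by
  rw [← Finset.powerset_univ, Finset.powerset_card_disjiUnion]
  erw [Finset.sum_disjiUnion]
  simp

lemma trace_tensor_sum {ρ : Fin n → Matrix (Fin d) (Fin d) ℂ} {p : Fin n → ℝ}
    (hρ : ∀ i, IsDensityMatrix (ρ i)) (hP : ∀ i, IsProjectionMatrix (P i))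
    (hp : ∀ i, p i = ((ρ i * P i).trace).re) (x : ℕ → ℝ) :
    (tensorState ρ * ∑ S : Finset (Fin n), ((x S.card : ℝ) : ℂ) • projFam P S).trace
      = ((∑ t ∈ Finset.range (n + 1), x t * pbPMF n p t : ℝ) : ℂ) := by
  rw [Finset.mul_sum, Matrix.trace_sum]
  have key : ∀ S : Finset (Fin n),
      (tensorState ρ * (((x S.card : ℝ) : ℂ) • projFam P S)).trace
      = ((x S.card * ((∏ i ∈ S, p i) * ∏ i ∈ Sᶜ, (1 - p i)) : ℝ) : ℂ) := by
    intro S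
    rw [Matrix.mul_smul, Matrix.trace_smul, trace_tensor_projFam hρ hP hp S, smul_eq_mul]
    push_cast
    ring
  rw [Finset.sum_congr rfl fun S _ => key S]
  have : ∑ S : Finset (Fin n),
      ((x S.card * ((∏ i ∈ S, p i) * ∏ i ∈ Sᶜ, (1 - p i)) : ℝ) : ℂ)
      = ((∑ S : Finset (Fin n),
          x S.card * ((∏ i ∈ S, p i) * ∏ i ∈ Sᶜ, (1 - p i)) : ℝ) : ℂ) := by
    push_cast
    rfl
  rw [this]
  congr 1
  rw [sum_card_group (fun S => x S.card * ((∏ i ∈ S, p i) * ∏ i ∈ Sᶜ, (1 - p i)))]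
  refine Finset.sum_congr rfl fun t _ => ?_
  rw [pbPMF, Finset.mul_sum]
  refine Finset.sum_congr rfl fun S hS => ?_
  rw [(Finset.mem_powersetCard.mp hS).2]

lemma pbPMF_nonneg {p : Fin n → ℝ} (hp0 : ∀ i, 0 ≤ p i) (hp1 : ∀ i, p i ≤ 1) (t : ℕ) :
    0 ≤ pbPMF n p t := by
  refine Finset.sum_nonneg fun S _ => mul_nonneg ?_ ?_
  · exact Finset.prod_nonneg fun i _ => hp0 i
  · exact Finset.prod_nonneg fun i _ => by linarith [hp1 i]

end ProjFam

end AuxLemmas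

set_option maxHeartbeats 2000000 in
/-- **Gentle quantum measurements on non-identical product states.**
Fix `0 ≤ θ ≤ 1`, a nonnegative real random variable `X` (with law `μ`), density
matrices `ρ₁,…,ρₙ` and orthogonal projections `Π₁,…,Πₙ` on `ℂ^d`.  With
`pᵢ = Tr(ρᵢ Πᵢ)`, `T ~ PB(p)` independent of `X` and `Pr(T + X ≤ θn) > 0`, there is an
operator `0 ≤ B ≤ I` on `(ℂ^d)^{⊗n}` such that, with `ϱ = ρ₁ ⊗ ⋯ ⊗ ρₙ`:
(i) `Tr(ϱ B) = Pr(T + X > θn)`, and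
(ii) `F(ϱ, ϱ|_{√(I-B)}) = BC((T | T + X ≤ θn), T)`. -/
theorem gentle_quantum_measurement_product_states
    (d n : ℕ) (ρ P : Fin n → Matrix (Fin d) (Fin d) ℂ) (p : Fin n → ℝ) (θ : ℝ)
    (μ : MeasureTheory.Measure ℝ) [MeasureTheory.IsProbabilityMeasure μ]
    (hμ : μ (Set.Iio 0) = 0)
    (hθ0 : 0 ≤ θ) (hθ1 : θ ≤ 1)
    (hρ : ∀ i, IsDensityMatrix (ρ i)) (hP : ∀ i, IsProjectionMatrix (P i))
    (hp : ∀ i, p i = ((ρ i * P i).trace).re)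
    (hpos : 0 < prAtMostLaw n p μ θ) :
    ∃ B : Matrix (Fin n → Fin d) (Fin n → Fin d) ℂ,
      B.PosSemidef ∧ (1 - B).PosSemidef ∧
      (tensorState ρ * B).trace = (prExceedLaw n p μ θ : ℂ) ∧
      fidelity (tensorState ρ) (postState (tensorState ρ) (1 - B)) = bcCond n p μ θ := by
  classical
  set a : ℕ → ℝ := fun t => (μ (Set.Iic (θ * n - t))).toReal with ha_def
  set c : ℕ → ℝ := fun t => (μ (Set.Ioi (θ * n - t))).toReal with hc_def
  have ha0 : ∀ t, 0 ≤ a t := fun t => ENNReal.toReal_nonneg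
  have hc0 : ∀ t, 0 ≤ c t := fun t => ENNReal.toReal_nonneg
  have hac : ∀ t : ℕ, a t + c t = 1 := by
    intro t
    have hmeas := MeasureTheory.measure_add_measure_compl
      (μ := μ) (measurableSet_Iic (a := θ * n - t))
    rw [Set.compl_Iic] at hmeas
    have h2 := congrArg ENNReal.toReal hmeas
    rw [ENNReal.toReal_add (MeasureTheory.measure_ne_top μ _) (MeasureTheory.measure_ne_top μ _),
      MeasureTheory.measure_univ, ENNReal.toReal_one] at h2
    exact h2
  have hp0 : ∀ i, 0 ≤ p i := fun i => (hp i) ▸ trace_mul_proj_re_nonneg (hρ i).1 (hP i)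
  have hp1 : ∀ i, p i ≤ 1 := fun i => (hp i) ▸ trace_mul_proj_le_one (hρ i) (hP i)
  have hpb := pbPMF_nonneg hp0 hp1
  have hϱpsd : (tensorState ρ).PosSemidef := tensorState_posSemidef fun i => (hρ i).1
  have h1B : (1 : Matrix (Fin n → Fin d) (Fin n → Fin d) ℂ)
      - ∑ S : Finset (Fin n), ((c S.card : ℝ) : ℂ) • projFam P S
      = ∑ S : Finset (Fin n), ((a S.card : ℝ) : ℂ) • projFam P S := by
    nth_rewrite 1 [← projFam_sum (P := P)]
    rw [← Finset.sum_sub_distrib]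
    refine Finset.sum_congr rfl fun S _ => ?_
    nth_rewrite 1 [← one_smul ℂ (projFam P S)]
    rw [← sub_smul]
    congr 1
    have h := hac S.card
    have h2 : a S.card = 1 - c S.card := by linarith
    rw [h2]
    push_cast
    ring
  refine ⟨∑ S : Finset (Fin n), ((c S.card : ℝ) : ℂ) • projFam P S, ?_, ?_, ?_, ?_⟩
  · exact psd_sum _ _ fun S _ => psd_smul_real (projFam_psd hP S) (hc0 S.card)
  · rw [h1B]
    exact psd_sum _ _ fun S _ => psd_smul_real (projFam_psd hP S) (ha0 S.card)
  · rw [trace_tensor_sum hρ hP hp c]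
    congr 1
    unfold prExceedLaw
    simp only [hc_def]
    exact Finset.sum_congr rfl fun t _ => mul_comm _ _
  · -- fidelity
    have hs : 0 < prAtMostLaw n p μ θ := hpos
    have hCpsd : (∑ S : Finset (Fin n), ((Real.sqrt (a S.card) : ℝ) : ℂ) • projFam P S).PosSemidef :=
      psd_sum _ _ fun S _ => psd_smul_real (projFam_psd hP S) (Real.sqrt_nonneg _)
    have hCsq : (∑ S : Finset (Fin n), ((Real.sqrt (a S.card) : ℝ) : ℂ) • projFam P S) ^ 2
        = 1 - ∑ S : Finset (Fin n), ((c S.card : ℝ) : ℂ) • projFam P S := by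
      rw [sq, sum_smul_projFam_mul hP, h1B]
      exact Finset.sum_congr rfl fun S _ => by rw [Real.mul_self_sqrt (ha0 _)]
    have hsqrtE : matSqrt (1 - ∑ S : Finset (Fin n), ((c S.card : ℝ) : ℂ) • projFam P S)
        = ∑ S : Finset (Fin n), ((Real.sqrt (a S.card) : ℝ) : ℂ) • projFam P S :=
      matSqrt_eq hCpsd hCsq
    set Csq := ∑ S : Finset (Fin n), ((Real.sqrt (a S.card) : ℝ) : ℂ) • projFam P S with hC_def
    have htraceC : (tensorState ρ * Csq).trace
        = ((∑ t ∈ Finset.range (n + 1), Real.sqrt (a t) * pbPMF n p t : ℝ) : ℂ) := by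
      rw [hC_def]
      exact trace_tensor_sum hρ hP hp (fun t => Real.sqrt (a t))
    have htraceE : (tensorState ρ *
          (1 - ∑ S : Finset (Fin n), ((c S.card : ℝ) : ℂ) • projFam P S)).trace
        = ((prAtMostLaw n p μ θ : ℝ) : ℂ) := by
      rw [h1B, trace_tensor_sum hρ hP hp a]
      congr 1
      unfold prAtMostLaw
      simp only [ha_def]
      exact Finset.sum_congr rfl fun t _ => mul_comm _ _
    have hN : (matSqrt (1 - ∑ S : Finset (Fin n), ((c S.card : ℝ) : ℂ) • projFam P S)
          * tensorState ρ *
          matSqrt (1 - ∑ S : Finset (Fin n), ((c S.card : ℝ) : ℂ) • projFam P S)).trace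
        = ((prAtMostLaw n p μ θ : ℝ) : ℂ) := by
      rw [hsqrtE, Matrix.trace_mul_cycle, ← sq, hCsq, Matrix.trace_mul_comm]
      exact htraceE
    have hRspec := matSqrt_spec hϱpsd
    have hRpsd : (matSqrt (tensorState ρ)).PosSemidef := hRspec.1
    have hRsq : (matSqrt (tensorState ρ)) ^ 2 = tensorState ρ := hRspec.2
    set R := matSqrt (tensorState ρ) with hR_def
    have hMpsd : (R * Csq * R).PosSemidef := by
      have h := hCpsd.conjTranspose_mul_mul_same R
      rwa [hRpsd.1.eq] at h
    have hMtrace : (R * Csq * R).trace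
        = ((∑ t ∈ Finset.range (n + 1), Real.sqrt (a t) * pbPMF n p t : ℝ) : ℂ) := by
      rw [Matrix.trace_mul_cycle, ← sq, hRsq]
      exact htraceC
    unfold fidelity postState
    rw [hN, hsqrtE, ← hR_def]
    have hinner : R * ((((prAtMostLaw n p μ θ : ℝ) : ℂ))⁻¹ • (Csq * tensorState ρ * Csq)) * R
        = (((prAtMostLaw n p μ θ)⁻¹ : ℝ) : ℂ) • (R * Csq * R) ^ 2 := by
      rw [mul_smul_comm, smul_mul_assoc, ← Complex.ofReal_inv]
      congr 1
      rw [← hRsq]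
      simp only [sq]
      simp only [mul_assoc]
    rw [hinner]
    have hsqrtM : matSqrt ((((prAtMostLaw n p μ θ)⁻¹ : ℝ) : ℂ) • (R * Csq * R) ^ 2)
        = ((Real.sqrt (prAtMostLaw n p μ θ)⁻¹ : ℝ) : ℂ) • (R * Csq * R) := by
      refine matSqrt_eq (psd_smul_real hMpsd (Real.sqrt_nonneg _)) ?_
      rw [smul_pow]
      congr 1
      rw [← Complex.ofReal_pow, Real.sq_sqrt (inv_nonneg.mpr hs.le)]
    rw [hsqrtM, Matrix.trace_smul, hMtrace, smul_eq_mul, ← Complex.ofReal_mul,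
      Complex.ofReal_re]
    unfold bcCond
    rw [Finset.mul_sum]
    refine (Finset.sum_congr rfl fun t _ => ?_).symm
    have hat : (μ (Set.Iic (θ * (n : ℝ) - (t : ℝ)))).toReal = a t := by rw [ha_def]
    rw [hat]
    have hterm : pbPMF n p t * a t / prAtMostLaw n p μ θ * pbPMF n p t
        = (pbPMF n p t * pbPMF n p t) * (a t * (prAtMostLaw n p μ θ)⁻¹) := by
      rw [div_eq_mul_inv]
      ring
    rw [hterm, Real.sqrt_mul (mul_self_nonneg _), Real.sqrt_mul_self (hpb t),
      Real.sqrt_mul (ha0 t)]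
    ring
end

section
/- Let N ≥ n ≥ 1 and let X_1,…,X_n be a uniformly random sample drawn without replacement from {1,…,N}. Let {x_{i,j} : 1 ≤ i ≤ M, 1 ≤ j ≤ N} be M finite populations of N numbers each, with 0 ≤ x_{i,j} ≤ 1 for all i, j, and set μ_i = (1/N)Σ_{j=1}^N x_{i,j}. Then for every ε > 0, Pr( max_{1 ≤ i ≤ M} |Σ_{j=1}^n x_{i,X_j} − nμ_i| ≥ nε ) ≤ 2M e^{−2nε²}. -/
open scoped BigOperators Classical


lemma hoef_scalar (p : ℝ) (hp0 : 0 ≤ p) (hp1 : p ≤ 1) (t : ℝ) (ht : 0 ≤ t) :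
    1 - p + p * Real.exp t ≤ Real.exp (p * t + t ^ 2 / 8) := by
  set D : ℝ → ℝ := fun u => 1 - p + p * Real.exp u with hD
  have hDpos : ∀ u, 0 < D u := by
    intro u
    rcases eq_or_lt_of_le hp0 with h | h
    · simp [hD, ← h]
    · have := Real.exp_pos u
      have : 0 < p * Real.exp u := mul_pos h this
      simp only [hD]
      nlinarith
  set φ' : ℝ → ℝ := fun u => p + u / 4 - p * Real.exp u / D u with hφ'
  set φ : ℝ → ℝ := fun u => p * u + u ^ 2 / 8 - Real.log (D u) with hφ
  have hDder : ∀ u, HasDerivAt D (p * Real.exp u) u := by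
    intro u
    exact ((Real.hasDerivAt_exp u).const_mul p).const_add (1 - p)
  have hφder : ∀ u, HasDerivAt φ (φ' u) u := by
    intro u
    have h1 : HasDerivAt (fun u : ℝ => p * u + u ^ 2 / 8) (p + 2 * u / 8) u := by
      have := ((hasDerivAt_pow 2 u).div_const 8).const_add (0:ℝ)
      have h2 : HasDerivAt (fun u : ℝ => p * u) p u := by
        simpa using (hasDerivAt_id u).const_mul p
      simpa [pow_one] using h2.fun_add ((hasDerivAt_pow 2 u).div_const 8)
    have h3 : HasDerivAt (fun u => Real.log (D u)) (p * Real.exp u / D u) u :=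
      (hDder u).log (ne_of_gt (hDpos u))
    have := h1.fun_sub h3
    convert this using 1
    · rfl
    · rfl
    simp only [hφ']
    ring
  have hφ'der : ∀ u, HasDerivAt φ'
      (1 / 4 - (p * Real.exp u * D u - p * Real.exp u * (p * Real.exp u)) / (D u) ^ 2) u := by
    intro u
    have hq : HasDerivAt (fun u => p * Real.exp u / D u)
        ((p * Real.exp u * D u - p * Real.exp u * (p * Real.exp u)) / (D u) ^ 2) u :=
      ((Real.hasDerivAt_exp u).const_mul p).div (hDder u) (ne_of_gt (hDpos u))
    have h1 : HasDerivAt (fun u : ℝ => p + u / 4) (1 / 4) u := by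
      simpa using ((hasDerivAt_id u).div_const 4).const_add p
    simpa using h1.fun_sub hq
  have hφ''nonneg : ∀ u, 0 ≤ 1 / 4 - (p * Real.exp u * D u - p * Real.exp u * (p * Real.exp u)) / (D u) ^ 2 := by
    intro u
    rw [sub_nonneg, div_le_iff₀ (by have := hDpos u; positivity)]
    have hE := Real.exp_pos u
    have : p * Real.exp u * D u - p * Real.exp u * (p * Real.exp u)
        = (p * Real.exp u) * (1 - p) := by simp only [hD]; ring
    rw [this]
    have hsq : 0 ≤ ((1 - p) - p * Real.exp u) ^ 2 := sq_nonneg _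
    have : (D u) ^ 2 = ((1 - p) + p * Real.exp u) ^ 2 := by simp [hD]
    rw [this]
    nlinarith
  have hφ'mono : Monotone φ' := by
    apply monotone_of_deriv_nonneg
    · intro u; exact (hφ'der u).differentiableAt
    · intro u; rw [(hφ'der u).deriv]; exact hφ''nonneg u
  have hφ'0 : φ' 0 = 0 := by
    simp only [hφ', hD]
    field_simp
    rw [Real.exp_zero]; ring
  have hφ'nonneg : ∀ u, 0 ≤ u → 0 ≤ φ' u := by
    intro u hu
    rw [← hφ'0]
    exact hφ'mono hu
  have hφmono : MonotoneOn φ (Set.Ici 0) := by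
    apply monotoneOn_of_deriv_nonneg (convex_Ici 0)
    · exact fun u _ => ((hφder u).differentiableAt).continuousAt.continuousWithinAt
    · intro u hu
      exact ((hφder u).differentiableAt).differentiableWithinAt
    · intro u hu
      rw [(hφder u).deriv]
      exact hφ'nonneg u (le_of_lt (by simpa using hu))
  have hφ0 : φ 0 = 0 := by simp [hφ, hD]
  have := hφmono (Set.self_mem_Ici) (Set.mem_Ici.mpr ht) ht
  rw [hφ0] at this
  have hlog : Real.log (D t) ≤ p * t + t ^ 2 / 8 := by
    simp only [hφ] at this; linarith
  have := (Real.log_le_iff_le_exp (hDpos t)).mp hlog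
  simpa [hD] using this


lemma exists_perm_image {α : Type*} [Fintype α] [DecidableEq α] (s t : Finset α)
    (h : s.card = t.card) : ∃ π : Equiv.Perm α, s.image ⇑π = t := by
  classical
  have hc : (sᶜ : Finset α).card = (tᶜ : Finset α).card := by
    rw [Finset.card_compl, Finset.card_compl, h]
  let e : (s : Finset α) ≃ (t : Finset α) := Finset.equivOfCardEq h
  let ec : ((sᶜ : Finset α) : Type _) ≃ ((tᶜ : Finset α) : Type _) := Finset.equivOfCardEq hc
  let cs : {x // ¬ x ∈ s} ≃ ((sᶜ : Finset α) : Type _) :=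
    Equiv.subtypeEquivRight (fun x => (Finset.mem_compl).symm)
  let ct : ((tᶜ : Finset α) : Type _) ≃ {x // ¬ x ∈ t} :=
    Equiv.subtypeEquivRight (fun x => Finset.mem_compl)
  let π : Equiv.Perm α :=
    ((Equiv.sumCompl (· ∈ s)).symm.trans
      ((Equiv.sumCongr e ((cs.trans ec).trans ct)).trans (Equiv.sumCompl (· ∈ t))))
  have hπ : ∀ v ∈ s, π v ∈ t := by
    intro v hv
    have h1 : (Equiv.sumCompl (· ∈ s)).symm v = Sum.inl ⟨v, hv⟩ :=
      Equiv.sumCompl_symm_apply_of_pos hv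
    simp only [π, Equiv.trans_apply, h1, Equiv.sumCongr_apply, Sum.map_inl,
      Equiv.sumCompl_apply_inl]
    exact (e ⟨v, hv⟩).2
  refine ⟨π, ?_⟩
  apply Finset.eq_of_subset_of_card_le
  · intro v hv
    obtain ⟨u, hu, rfl⟩ := Finset.mem_image.mp hv
    exact hπ u hu
  · rw [Finset.card_image_of_injective _ π.injective, h]

lemma cover_card {N n : ℕ} (s t : Finset (Fin N)) (h : s.card = t.card) :
    (Finset.univ.filter fun σ : Fin n ↪ Fin N => s ⊆ Finset.image ⇑σ Finset.univ).card =
      (Finset.univ.filter fun σ : Fin n ↪ Fin N => t ⊆ Finset.image ⇑σ Finset.univ).card := by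
  classical
  obtain ⟨π, hπ⟩ := exists_perm_image s t h
  have himg : ∀ σ : Fin n ↪ Fin N,
      Finset.image ⇑(σ.trans π.toEmbedding) Finset.univ
        = (Finset.image ⇑σ Finset.univ).image ⇑π := by
    intro σ
    rw [Finset.image_image]
    rfl
  have himg' : ∀ σ : Fin n ↪ Fin N,
      Finset.image ⇑(σ.trans π.symm.toEmbedding) Finset.univ
        = (Finset.image ⇑σ Finset.univ).image ⇑π.symm := by
    intro σ
    rw [Finset.image_image]
    rfl
  apply Finset.card_bij' (i := fun σ _ => σ.trans π.toEmbedding)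
    (j := fun σ _ => σ.trans π.symm.toEmbedding)
  · intro σ hσ; ext j; simp
  · intro σ hσ; ext j; simp
  · intro σ hσ
    rw [Finset.mem_filter] at hσ ⊢
    refine ⟨Finset.mem_univ _, ?_⟩
    rw [himg, ← hπ]
    exact Finset.image_subset_image hσ.2
  · intro σ hσ
    rw [Finset.mem_filter] at hσ ⊢
    refine ⟨Finset.mem_univ _, ?_⟩
    rw [himg']
    intro v hv
    have h2 : π v ∈ t := by rw [← hπ]; exact Finset.mem_image_of_mem _ hv
    have h3 := hσ.2 h2
    obtain ⟨u, hu, huv⟩ := Finset.mem_image.mp h3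
    refine Finset.mem_image.mpr ⟨σ u, Finset.mem_image_of_mem _ (Finset.mem_univ u), ?_⟩
    rw [huv]
    simp

lemma key_ineq (N n : ℕ) (hn : 1 ≤ n) (hN : n ≤ N) (F : ℝ → ℝ)
    (hF : ConvexOn ℝ Set.univ F) (a : Fin N → ℝ) :
    ∑ σ : Fin n ↪ Fin N, F (∑ j, a (σ j)) ≤
      ((Fintype.card (Fin n ↪ Fin N) : ℝ) / (N : ℝ) ^ n) * ∑ g : Fin n → Fin N, F (∑ j, a (g j)) := by
  classical
  haveI : Nonempty (Fin n) := ⟨⟨0, hn⟩⟩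
  set D : (Fin n → Fin N) → ℕ := fun g =>
    (Finset.univ.filter fun σ : Fin n ↪ Fin N =>
      Finset.image g Finset.univ ⊆ Finset.image ⇑σ Finset.univ).card with hDdef
  -- D is positive
  have hDpos : ∀ g : Fin n → Fin N, 0 < D g := by
    intro g
    have hcard : (Finset.image g Finset.univ).card ≤ n :=
      le_trans Finset.card_image_le (by simp)
    obtain ⟨s, hsub, _, hs⟩ := Finset.exists_subsuperset_card_eq
      (Finset.subset_univ (Finset.image g Finset.univ)) hcard (by simp [hN])
    let e : Fin n ≃ (s : Finset (Fin N)) := (Finset.equivFinOfCardEq hs).symm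
    let σ : Fin n ↪ Fin N := e.toEmbedding.trans (Function.Embedding.subtype _)
    have himg : Finset.image ⇑σ Finset.univ = s := by
      apply Finset.eq_of_subset_of_card_le
      · intro v hv
        obtain ⟨u, _, rfl⟩ := Finset.mem_image.mp hv
        exact (e u).2
      · rw [Finset.card_image_of_injective _ σ.injective, hs]
        simp
    apply Finset.card_pos.mpr
    exact ⟨σ, Finset.mem_filter.mpr ⟨Finset.mem_univ _, by rw [himg]; exact hsub⟩⟩
  have hDne : ∀ g : Fin n → Fin N, (D g : ℝ) ≠ 0 := by
    intro g; exact Nat.cast_ne_zero.mpr (hDpos g).ne'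
  -- D depends only on the card of the image
  have hDcongr : ∀ g g' : Fin n → Fin N,
      (Finset.image g Finset.univ).card = (Finset.image g' Finset.univ).card → D g = D g' := by
    intro g g' h
    exact cover_card _ _ h
  set w : (Fin n ↪ Fin N) → (Fin n → Fin N) → ℝ := fun σ g =>
    if Finset.image g Finset.univ ⊆ Finset.image ⇑σ Finset.univ then (D g : ℝ)⁻¹ else 0
    with hwdef
  have hw_nonneg : ∀ σ g, 0 ≤ w σ g := by
    intro σ g
    simp only [hwdef]
    split
    · positivity
    · exact le_refl 0
  -- column sums are 1
  have hcol : ∀ g : Fin n → Fin N, ∑ σ : Fin n ↪ Fin N, w σ g = 1 := by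
    intro g
    rw [show (∑ σ : Fin n ↪ Fin N, w σ g) = ∑ σ ∈ Finset.univ.filter
        (fun σ : Fin n ↪ Fin N => Finset.image g Finset.univ ⊆ Finset.image ⇑σ Finset.univ),
        (D g : ℝ)⁻¹ from (Finset.sum_filter _ _).symm]
    rw [Finset.sum_const]
    show (D g) • ((D g : ℝ))⁻¹ = 1
    rw [nsmul_eq_mul, mul_inv_cancel₀ (hDne g)]
  -- image card under composition
  have him_card : ∀ (σ : Fin n ↪ Fin N) (h : Fin n → Fin n),
      (Finset.image (⇑σ ∘ h) Finset.univ).card = (Finset.image h Finset.univ).card := by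
    intro σ h
    rw [show Finset.image (⇑σ ∘ h) Finset.univ = (Finset.image h Finset.univ).image ⇑σ from
      (Finset.image_image).symm]
    exact Finset.card_image_of_injective _ σ.injective
  -- reindexing of the row sums
  have hre : ∀ (σ : Fin n ↪ Fin N) (G : (Fin n → Fin N) → ℝ),
      ∑ g : Fin n → Fin N, w σ g * G g
        = ∑ h : Fin n → Fin n, (D (⇑σ ∘ h) : ℝ)⁻¹ * G (⇑σ ∘ h) := by
    intro σ G
    have : ∑ g : Fin n → Fin N, w σ g * G g
        = ∑ g ∈ Finset.univ.filter (fun g : Fin n → Fin N =>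
            Finset.image g Finset.univ ⊆ Finset.image ⇑σ Finset.univ),
            (D g : ℝ)⁻¹ * G g := by
      rw [Finset.sum_filter]
      apply Finset.sum_congr rfl
      intro g _
      simp only [hwdef]
      split <;> simp
    rw [this]
    symm
    apply Finset.sum_nbij' (i := fun h => ⇑σ ∘ h)
      (j := fun g => fun k => Function.invFun ⇑σ (g k))
    · intro h _
      rw [Finset.mem_filter]
      refine ⟨Finset.mem_univ _, ?_⟩
      rw [show Finset.image (⇑σ ∘ h) Finset.univ = (Finset.image h Finset.univ).image ⇑σ from
        (Finset.image_image).symm]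
      exact Finset.image_subset_image (Finset.subset_univ _)
    · intro g _; exact Finset.mem_univ _
    · intro h _
      funext k
      exact Function.leftInverse_invFun σ.injective (h k)
    · intro g hg
      rw [Finset.mem_filter] at hg
      funext k
      have : g k ∈ Finset.image ⇑σ Finset.univ :=
        hg.2 (Finset.mem_image_of_mem _ (Finset.mem_univ k))
      obtain ⟨u, _, hu⟩ := Finset.mem_image.mp this
      simp only [Function.comp_apply]
      rw [← hu]
      rw [Function.leftInverse_invFun σ.injective u]
    · intro h _; rfl
  -- total weight is independent of σ
  have hW : ∀ σ σ' : Fin n ↪ Fin N, ∑ g : Fin n → Fin N, w σ g = ∑ g : Fin n → Fin N, w σ' g := by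
    intro σ σ'
    have h1 := hre σ (fun _ => 1)
    have h2 := hre σ' (fun _ => 1)
    simp only [mul_one] at h1 h2
    rw [h1, h2]
    apply Finset.sum_congr rfl
    intro h _
    have hc : D (⇑σ ∘ h) = D (⇑σ' ∘ h) :=
      hDcongr _ _ (by rw [him_card σ h, him_card σ' h])
    rw [hc]
  obtain ⟨σ₀⟩ : Nonempty (Fin n ↪ Fin N) :=
    Function.Embedding.nonempty_of_card_le (by simp [hN])
  set W0 : ℝ := ∑ g : Fin n → Fin N, w σ₀ g with hW0def
  have hNn : (0:ℝ) < (N:ℝ) ^ n := by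
    have : 0 < N := lt_of_lt_of_le hn hN
    positivity
  have hcardE : (0:ℝ) < (Fintype.card (Fin n ↪ Fin N) : ℝ) := by
    have : 0 < Fintype.card (Fin n ↪ Fin N) := Fintype.card_pos_iff.mpr ⟨σ₀⟩
    exact_mod_cast this
  have hW0eq : (Fintype.card (Fin n ↪ Fin N) : ℝ) * W0 = (N : ℝ) ^ n := by
    have h1 : ∑ σ : Fin n ↪ Fin N, (∑ g : Fin n → Fin N, w σ g)
        = (Fintype.card (Fin n ↪ Fin N) : ℝ) * W0 := by
      have heach : ∀ σ : Fin n ↪ Fin N, (∑ g : Fin n → Fin N, w σ g) = W0 := fun σ => hW σ σ₀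
      simp only [heach]
      rw [Finset.sum_const, Finset.card_univ, nsmul_eq_mul]
    have h2 : ∑ σ : Fin n ↪ Fin N, (∑ g : Fin n → Fin N, w σ g)
        = ∑ g : Fin n → Fin N, (∑ σ : Fin n ↪ Fin N, w σ g) := Finset.sum_comm
    rw [h2] at h1
    simp only [hcol] at h1
    rw [Finset.sum_const, Finset.card_univ, nsmul_eq_mul, mul_one] at h1
    rw [← h1]
    rw [Fintype.card_fun]
    push_cast
    simp
  have hW0pos : 0 < W0 := by
    by_contra hcon
    push_neg at hcon
    have : (Fintype.card (Fin n ↪ Fin N) : ℝ) * W0 ≤ 0 :=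
      mul_nonpos_of_nonneg_of_nonpos hcardE.le hcon
    rw [hW0eq] at this
    linarith
  -- conditional expectation identity
  have hcond : ∀ σ : Fin n ↪ Fin N,
      ∑ g : Fin n → Fin N, w σ g * (∑ j, a (g j)) = W0 * ∑ j, a (σ j) := by
    intro σ
    rw [hre σ (fun g => ∑ j, a (g j))]
    have hWσ : ∑ h : Fin n → Fin n, (D (⇑σ ∘ h) : ℝ)⁻¹ = W0 := by
      have h1 := hre σ (fun _ => 1)
      simp only [mul_one] at h1
      rw [← h1, hW σ σ₀]
    have step1 : ∑ h : Fin n → Fin n, (D (⇑σ ∘ h) : ℝ)⁻¹ * (∑ j, a ((⇑σ ∘ h) j))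
        = ∑ j : Fin n, ∑ h : Fin n → Fin n, (D (⇑σ ∘ h) : ℝ)⁻¹ * a (σ (h j)) := by
      simp only [Finset.mul_sum, Function.comp_apply]
      exact Finset.sum_comm
    rw [step1]
    have hfiber : ∀ j : Fin n, ∑ h : Fin n → Fin n, (D (⇑σ ∘ h) : ℝ)⁻¹ * a (σ (h j))
        = W0 / n * ∑ i : Fin n, a (σ i) := by
      intro j
      set β : Fin n → ℝ := fun i =>
        ∑ h ∈ Finset.univ.filter (fun h : Fin n → Fin n => h j = i), (D (⇑σ ∘ h) : ℝ)⁻¹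
        with hβdef
      have hβeq : ∀ i i' : Fin n, β i = β i' := by
        intro i i'
        simp only [hβdef]
        apply Finset.sum_nbij' (i := fun h => ⇑(Equiv.swap i i') ∘ h)
          (j := fun h => ⇑(Equiv.swap i i') ∘ h)
        · intro h hh
          rw [Finset.mem_filter] at hh ⊢
          refine ⟨Finset.mem_univ _, ?_⟩
          simp only [Function.comp_apply, hh.2]
          exact Equiv.swap_apply_left i i'
        · intro h hh
          rw [Finset.mem_filter] at hh ⊢
          refine ⟨Finset.mem_univ _, ?_⟩
          simp only [Function.comp_apply, hh.2]
          exact Equiv.swap_apply_right i i'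
        · intro h _
          funext k
          simp [Equiv.swap_apply_self]
        · intro h _
          funext k
          simp [Equiv.swap_apply_self]
        · intro h _
          congr 2
          apply hDcongr
          rw [him_card, him_card]
          rw [show Finset.image (⇑(Equiv.swap i i') ∘ h) Finset.univ
            = (Finset.image h Finset.univ).image ⇑(Equiv.swap i i') from
            (Finset.image_image).symm]
          exact (Finset.card_image_of_injective _ (Equiv.swap i i').injective).symm
      have hβsum : ∑ i : Fin n, β i = W0 := by
        rw [hβdef, ← hWσ]
        exact Finset.sum_fiberwise Finset.univ (fun h : Fin n → Fin n => h j) _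
      have hβval : ∀ i : Fin n, β i = W0 / n := by
        intro i
        have : ∑ i' : Fin n, β i' = ∑ _i' : Fin n, β i :=
          Finset.sum_congr rfl (fun i' _ => hβeq i' i)
        rw [hβsum, Finset.sum_const, Finset.card_univ, Fintype.card_fin, nsmul_eq_mul] at this
        have hn' : (n : ℝ) ≠ 0 := by positivity
        field_simp at this ⊢
        linarith
      have hpart : ∑ h : Fin n → Fin n, (D (⇑σ ∘ h) : ℝ)⁻¹ * a (σ (h j))
          = ∑ i : Fin n, ∑ h ∈ Finset.univ.filter (fun h : Fin n → Fin n => h j = i),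
              (D (⇑σ ∘ h) : ℝ)⁻¹ * a (σ (h j)) :=
        (Finset.sum_fiberwise Finset.univ (fun h : Fin n → Fin n => h j) _).symm
      rw [hpart]
      have hinner : ∀ i : Fin n,
          ∑ h ∈ Finset.univ.filter (fun h : Fin n → Fin n => h j = i),
              (D (⇑σ ∘ h) : ℝ)⁻¹ * a (σ (h j)) = W0 / n * a (σ i) := by
        intro i
        have : ∑ h ∈ Finset.univ.filter (fun h : Fin n → Fin n => h j = i),
            (D (⇑σ ∘ h) : ℝ)⁻¹ * a (σ (h j))
            = ∑ h ∈ Finset.univ.filter (fun h : Fin n → Fin n => h j = i),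
            (D (⇑σ ∘ h) : ℝ)⁻¹ * a (σ i) := by
          apply Finset.sum_congr rfl
          intro h hh
          rw [(Finset.mem_filter.mp hh).2]
        rw [this, ← Finset.sum_mul]
        show β i * a (σ i) = W0 / n * a (σ i)
        rw [hβval i]
      simp only [hinner]
      rw [← Finset.mul_sum]
    simp only [hfiber]
    rw [Finset.sum_const, Finset.card_univ, Fintype.card_fin, nsmul_eq_mul]
    have hn' : (n : ℝ) ≠ 0 := by positivity
    field_simp
  -- Jensen inequality for each σ
  have hjensen : ∀ σ : Fin n ↪ Fin N,
      F (∑ j, a (σ j)) ≤ ∑ g : Fin n → Fin N, (w σ g / W0) * F (∑ j, a (g j)) := by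
    intro σ
    have h₁ : ∑ g : Fin n → Fin N, w σ g / W0 = 1 := by
      rw [← Finset.sum_div, hW σ σ₀, ← hW0def, div_self (ne_of_gt hW0pos)]
    have hmain := hF.map_sum_le (t := Finset.univ) (w := fun g => w σ g / W0)
      (p := fun g : Fin n → Fin N => ∑ j, a (g j))
      (fun g _ => div_nonneg (hw_nonneg σ g) hW0pos.le) h₁ (fun g _ => Set.mem_univ _)
    have harg : ∑ g : Fin n → Fin N, (w σ g / W0) • (∑ j, a (g j)) = ∑ j, a (σ j) := by
      simp only [smul_eq_mul, div_mul_eq_mul_div]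
      rw [← Finset.sum_div, hcond σ, mul_comm, mul_div_assoc, div_self (ne_of_gt hW0pos), mul_one]
    rw [harg] at hmain
    simpa [smul_eq_mul] using hmain
  -- summing up
  calc ∑ σ : Fin n ↪ Fin N, F (∑ j, a (σ j))
      ≤ ∑ σ : Fin n ↪ Fin N, ∑ g : Fin n → Fin N, (w σ g / W0) * F (∑ j, a (g j)) :=
        Finset.sum_le_sum (fun σ _ => hjensen σ)
    _ = ∑ g : Fin n → Fin N, ∑ σ : Fin n ↪ Fin N, (w σ g / W0) * F (∑ j, a (g j)) :=
        Finset.sum_comm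
    _ = ∑ g : Fin n → Fin N, (∑ σ : Fin n ↪ Fin N, w σ g) * (F (∑ j, a (g j)) / W0) := by
        apply Finset.sum_congr rfl
        intro g _
        rw [Finset.sum_mul]
        apply Finset.sum_congr rfl
        intro σ _
        ring
    _ = ∑ g : Fin n → Fin N, F (∑ j, a (g j)) / W0 := by
        simp only [hcol, one_mul]
    _ = ((Fintype.card (Fin n ↪ Fin N) : ℝ) / (N : ℝ) ^ n) * ∑ g : Fin n → Fin N, F (∑ j, a (g j)) := by
        rw [← Finset.sum_div]
        have hW0' : W0 = (N : ℝ) ^ n / (Fintype.card (Fin n ↪ Fin N) : ℝ) :=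
          (eq_div_iff (ne_of_gt hcardE)).mpr (by rw [mul_comm]; exact hW0eq)
        rw [hW0', div_div_eq_mul_div]
        ring


lemma onesided (N n : ℕ) (hn : 1 ≤ n) (hN : n ≤ N) (a : Fin N → ℝ)
    (ha : ∀ j, 0 ≤ a j ∧ a j ≤ 1) (ε : ℝ) (hε : 0 < ε) :
    ((Finset.univ.filter (fun σ : Fin n ↪ Fin N =>
        (n : ℝ) * ε ≤ (∑ j, a (σ j)) - n * ((∑ j, a j) / N))).card : ℝ) ≤
      (Fintype.card (Fin n ↪ Fin N) : ℝ) * Real.exp (-2 * n * ε ^ 2) := by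
  classical
  have hN0 : 0 < N := lt_of_lt_of_le hn hN
  have hN0' : (0:ℝ) < N := by exact_mod_cast hN0
  set t : ℝ := 4 * ε with htdef
  have ht : 0 < t := by positivity
  set A : ℝ := ∑ j, a j with hAdef
  set μ : ℝ := A / N with hμdef
  have hA0 : 0 ≤ A := Finset.sum_nonneg fun j _ => (ha j).1
  have hA1 : A ≤ N := by
    calc A ≤ ∑ _j : Fin N, (1:ℝ) := Finset.sum_le_sum fun j _ => (ha j).2
      _ = N := by simp
  have hμ0 : 0 ≤ μ := div_nonneg hA0 hN0'.le
  have hμ1 : μ ≤ 1 := by rw [hμdef, div_le_one hN0']; exact hA1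
  -- convexity of s ↦ exp (t * s)
  have hF : ConvexOn ℝ Set.univ (fun s : ℝ => Real.exp (t * s)) := by
    refine ⟨convex_univ, ?_⟩
    intro p _ q _ α β hα hβ hαβ
    have h1 := convexOn_exp.2 (Set.mem_univ (t*p)) (Set.mem_univ (t*q)) hα hβ hαβ
    simp only [smul_eq_mul] at h1 ⊢
    calc Real.exp (t * (α * p + β * q)) = Real.exp (α * (t*p) + β * (t*q)) := by ring_nf
      _ ≤ α * Real.exp (t*p) + β * Real.exp (t*q) := h1
  have hkey := key_ineq N n hn hN (fun s : ℝ => Real.exp (t * s)) hF a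
  -- Chernoff step
  set filt := Finset.univ.filter (fun σ : Fin n ↪ Fin N =>
      (n : ℝ) * ε ≤ (∑ j, a (σ j)) - n * ((∑ j, a j) / N)) with hfiltdef
  have hchern : (filt.card : ℝ) * Real.exp (t * ((n:ℝ) * μ + n * ε))
      ≤ ∑ σ : Fin n ↪ Fin N, Real.exp (t * ∑ j, a (σ j)) := by
    have h1 : (filt.card : ℝ) * Real.exp (t * ((n:ℝ) * μ + n * ε))
        = ∑ _σ ∈ filt, Real.exp (t * ((n:ℝ) * μ + n * ε)) := by
      rw [Finset.sum_const, nsmul_eq_mul]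
    rw [h1]
    apply le_trans (Finset.sum_le_sum (f := fun σ : Fin n ↪ Fin N =>
        Real.exp (t * ((n:ℝ) * μ + n * ε)))
        (g := fun σ : Fin n ↪ Fin N => Real.exp (t * ∑ j, a (σ j))) ?_)
      (Finset.sum_le_sum_of_subset_of_nonneg (Finset.filter_subset _ _) ?_)
    · intro σ hσ
      rw [Finset.mem_filter] at hσ
      show Real.exp (t * ((n:ℝ) * μ + n * ε)) ≤ Real.exp (t * ∑ j, a (σ j))
      apply Real.exp_le_exp.mpr
      apply mul_le_mul_of_nonneg_left _ ht.le
      rw [hμdef, hAdef]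
      linarith [hσ.2]
    · intro σ _ _
      positivity
  -- product structure
  have hprod : ∑ g : Fin n → Fin N, Real.exp (t * ∑ j, a (g j))
      = (∑ v : Fin N, Real.exp (t * a v)) ^ n := by
    rw [Finset.sum_pow', Fintype.piFinset_univ]
    apply Finset.sum_congr rfl
    intro g _
    rw [← Real.exp_sum, ← Finset.mul_sum]
  -- pointwise convexity bound
  have hpoint : ∀ v : Fin N, Real.exp (t * a v) ≤ 1 - a v + a v * Real.exp t := by
    intro v
    have h1 : Real.exp ((1 - a v) * 0 + a v * t)
        ≤ (1 - a v) * Real.exp 0 + a v * Real.exp t := by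
      have h2 := convexOn_exp.2 (Set.mem_univ (0:ℝ)) (Set.mem_univ t)
        (show (0:ℝ) ≤ 1 - a v by linarith [(ha v).2]) ((ha v).1)
        (show (1 - a v) + a v = 1 by ring)
      simpa [smul_eq_mul] using h2
    have h3 : (1 - a v) * 0 + a v * t = t * a v := by ring
    rw [h3, Real.exp_zero, mul_one] at h1
    exact h1
  have hsumexp : ∑ v : Fin N, Real.exp (t * a v) ≤ (N:ℝ) * Real.exp (t * μ + t^2/8) := by
    calc ∑ v : Fin N, Real.exp (t * a v) ≤ ∑ v : Fin N, (1 - a v + a v * Real.exp t) :=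
          Finset.sum_le_sum fun v _ => hpoint v
      _ = (N:ℝ) * (1 - μ + μ * Real.exp t) := by
          rw [Finset.sum_add_distrib, Finset.sum_sub_distrib, ← Finset.sum_mul]
          simp only [Finset.sum_const, Finset.card_univ, Fintype.card_fin, nsmul_eq_mul,
            mul_one, ← hAdef]
          rw [hμdef]
          field_simp
      _ ≤ (N:ℝ) * Real.exp (μ * t + t^2/8) :=
          mul_le_mul_of_nonneg_left (hoef_scalar μ hμ0 hμ1 t ht.le) hN0'.le
      _ = (N:ℝ) * Real.exp (t * μ + t^2/8) := by rw [mul_comm μ t]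
  have hsum_nonneg : (0:ℝ) ≤ ∑ v : Fin N, Real.exp (t * a v) :=
    Finset.sum_nonneg fun v _ => (Real.exp_pos _).le
  have hpow : (∑ v : Fin N, Real.exp (t * a v)) ^ n
      ≤ ((N:ℝ) * Real.exp (t * μ + t^2/8)) ^ n :=
    pow_le_pow_left₀ hsum_nonneg hsumexp n
  have hfinal : (filt.card : ℝ) * Real.exp (t * ((n:ℝ) * μ + n * ε))
      ≤ (Fintype.card (Fin n ↪ Fin N) : ℝ) * Real.exp ((n:ℝ) * (t * μ + t^2/8)) := by
    calc (filt.card : ℝ) * Real.exp (t * ((n:ℝ) * μ + n * ε))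
        ≤ ∑ σ : Fin n ↪ Fin N, Real.exp (t * ∑ j, a (σ j)) := hchern
      _ ≤ ((Fintype.card (Fin n ↪ Fin N) : ℝ) / (N : ℝ) ^ n) *
            ∑ g : Fin n → Fin N, Real.exp (t * ∑ j, a (g j)) := hkey
      _ = ((Fintype.card (Fin n ↪ Fin N) : ℝ) / (N : ℝ) ^ n) *
            (∑ v : Fin N, Real.exp (t * a v)) ^ n := by rw [hprod]
      _ ≤ ((Fintype.card (Fin n ↪ Fin N) : ℝ) / (N : ℝ) ^ n) *
            ((N:ℝ) * Real.exp (t * μ + t^2/8)) ^ n := by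
          apply mul_le_mul_of_nonneg_left hpow
          positivity
      _ = (Fintype.card (Fin n ↪ Fin N) : ℝ) * Real.exp ((n:ℝ) * (t * μ + t^2/8)) := by
          rw [mul_pow, Real.exp_nat_mul]
          field_simp
  -- conclude
  have hE1 : (0:ℝ) < Real.exp (t * ((n:ℝ) * μ + n * ε)) := Real.exp_pos _
  have := (le_div_iff₀ hE1).mpr hfinal
  calc (filt.card : ℝ)
      ≤ (Fintype.card (Fin n ↪ Fin N) : ℝ) * Real.exp ((n:ℝ) * (t * μ + t^2/8)) /
          Real.exp (t * ((n:ℝ) * μ + n * ε)) := this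
    _ = (Fintype.card (Fin n ↪ Fin N) : ℝ) *
          Real.exp ((n:ℝ) * (t * μ + t^2/8) - t * ((n:ℝ) * μ + n * ε)) := by
        rw [Real.exp_sub]
        ring
    _ = (Fintype.card (Fin n ↪ Fin N) : ℝ) * Real.exp (-2 * n * ε ^ 2) := by
        congr 1
        rw [htdef]
        ring

/-- **Hoeffding bound for sampling without replacement, simultaneously for `M`
populations.**  Let `X₁,…,Xₙ` be a uniformly random injective tuple of indices
drawn from `{1,…,N}` (`N ≥ n ≥ 1`), i.e. a uniformly random embedding
`σ : Fin n ↪ Fin N`.  Given `M` populations `x i : Fin N → [0,1]` with means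
`μᵢ = (1/N) ∑ⱼ x i j`, the probability that some population's sample sum deviates
from `n·μᵢ` by at least `n·ε` is at most `2·M·exp(-2nε²)`. -/
theorem sampling_without_replacement_hoeffding
    (N n M : ℕ) (hn : 1 ≤ n) (hN : n ≤ N)
    (x : Fin M → Fin N → ℝ) (hx : ∀ i j, 0 ≤ x i j ∧ x i j ≤ 1)
    (ε : ℝ) (hε : 0 < ε) :
    ((Finset.univ.filter (fun σ : Fin n ↪ Fin N =>
          ∃ i : Fin M,
            (n : ℝ) * ε ≤ |(∑ j, x i (σ j)) - n * ((∑ j, x i j) / N)|)).card : ℝ)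
        / (Fintype.card (Fin n ↪ Fin N)) ≤
      2 * M * Real.exp (-2 * n * ε ^ 2) := by
  classical
  have hN0 : 0 < N := lt_of_lt_of_le hn hN
  have hN0' : (0:ℝ) < N := by exact_mod_cast hN0
  obtain ⟨σ₀⟩ : Nonempty (Fin n ↪ Fin N) :=
    Function.Embedding.nonempty_of_card_le (by simp [hN])
  have hcardE : (0:ℝ) < (Fintype.card (Fin n ↪ Fin N) : ℝ) := by
    exact_mod_cast Fintype.card_pos_iff.mpr ⟨σ₀⟩
  rw [div_le_iff₀ hcardE]
  set Pplus : Fin M → Finset (Fin n ↪ Fin N) := fun i =>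
    Finset.univ.filter (fun σ : Fin n ↪ Fin N =>
      (n : ℝ) * ε ≤ (∑ j, x i (σ j)) - n * ((∑ j, x i j) / N)) with hPplus
  set Pminus : Fin M → Finset (Fin n ↪ Fin N) := fun i =>
    Finset.univ.filter (fun σ : Fin n ↪ Fin N =>
      (n : ℝ) * ε ≤ (∑ j, (1 - x i (σ j))) - n * ((∑ j, (1 - x i j)) / N)) with hPminus
  have hplus : ∀ i, ((Pplus i).card : ℝ) ≤
      (Fintype.card (Fin n ↪ Fin N) : ℝ) * Real.exp (-2 * n * ε ^ 2) :=
    fun i => onesided N n hn hN (x i) (hx i) ε hε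
  have hminus : ∀ i, ((Pminus i).card : ℝ) ≤
      (Fintype.card (Fin n ↪ Fin N) : ℝ) * Real.exp (-2 * n * ε ^ 2) := by
    intro i
    have hb : ∀ j, 0 ≤ 1 - x i j ∧ 1 - x i j ≤ 1 :=
      fun j => ⟨by linarith [(hx i j).2], by linarith [(hx i j).1]⟩
    exact onesided N n hn hN (fun j => 1 - x i j) hb ε hε
  have hcondrw : ∀ (i : Fin M) (σ : Fin n ↪ Fin N),
      (∑ j, (1 - x i (σ j))) - (n:ℝ) * ((∑ j, (1 - x i j)) / N)
        = (n:ℝ) * ((∑ j, x i j) / N) - ∑ j, x i (σ j) := by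
    intro i σ
    have hS : ∑ j : Fin n, (1 - x i (σ j)) = (n:ℝ) - ∑ j, x i (σ j) := by
      rw [Finset.sum_sub_distrib]; simp
    have hA : ∑ j : Fin N, (1 - x i j) = (N:ℝ) - ∑ j, x i j := by
      rw [Finset.sum_sub_distrib]; simp
    rw [hS, hA]
    field_simp
    ring
  have hsub : (Finset.univ.filter (fun σ : Fin n ↪ Fin N =>
        ∃ i : Fin M, (n : ℝ) * ε ≤ |(∑ j, x i (σ j)) - n * ((∑ j, x i j) / N)|))
      ⊆ Finset.univ.biUnion (fun i => Pplus i ∪ Pminus i) := by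
    intro σ hσ
    rw [Finset.mem_filter] at hσ
    obtain ⟨i, hi⟩ := hσ.2
    refine Finset.mem_biUnion.mpr ⟨i, Finset.mem_univ i, ?_⟩
    rcases le_abs.mp hi with h | h
    · exact Finset.mem_union_left _ (Finset.mem_filter.mpr ⟨Finset.mem_univ _, h⟩)
    · refine Finset.mem_union_right _ (Finset.mem_filter.mpr ⟨Finset.mem_univ _, ?_⟩)
      rw [hcondrw i σ]
      linarith
  calc ((Finset.univ.filter (fun σ : Fin n ↪ Fin N =>
          ∃ i : Fin M,
            (n : ℝ) * ε ≤ |(∑ j, x i (σ j)) - n * ((∑ j, x i j) / N)|)).card : ℝ)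
      ≤ ((Finset.univ.biUnion (fun i => Pplus i ∪ Pminus i)).card : ℝ) := by
        exact_mod_cast Finset.card_le_card hsub
    _ ≤ ∑ i : Fin M, (((Pplus i ∪ Pminus i)).card : ℝ) := by
        exact_mod_cast Finset.card_biUnion_le
    _ ≤ ∑ i : Fin M, (((Pplus i).card : ℝ) + ((Pminus i).card : ℝ)) := by
        apply Finset.sum_le_sum
        intro i _
        exact_mod_cast Finset.card_union_le _ _
    _ ≤ ∑ _i : Fin M, 2 * ((Fintype.card (Fin n ↪ Fin N) : ℝ) * Real.exp (-2 * n * ε ^ 2)) := by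
        apply Finset.sum_le_sum
        intro i _
        linarith [hplus i, hminus i]
    _ = 2 * M * Real.exp (-2 * n * ε ^ 2) * (Fintype.card (Fin n ↪ Fin N) : ℝ) := by
        rw [Finset.sum_const, Finset.card_univ, Fintype.card_fin, nsmul_eq_mul]
        ring
end

section
/- Let A and B be Hermitian d×d matrices with ‖A − B‖ ≤ ε for some ε > 0, let θ ∈ ℝ, and suppose A has no eigenvalues in the open interval (θ − 2ε, θ + 2ε). Let E be the orthogonal projection onto the span of the eigenspaces of A with eigenvalues at most θ − ε, and let F be the orthogonal projection onto the span of the eigenspaces of B with eigenvalues at most θ − ε. Then ‖E − F‖ ≤ (π/(4ε))·‖A − B‖, where ‖·‖ is the operator norm. -/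
open scoped BigOperators ComplexOrder Matrix Classical
open Matrix

/-- Operator (spectral) norm of a matrix. -/
noncomputable def opNorm {m : Type*} [Fintype m] [DecidableEq m]
    (M : Matrix m m ℂ) : ℝ :=
  ‖Matrix.toEuclideanCLM (𝕜 := ℂ) M‖

/-- For a Hermitian matrix `A`, the orthogonal projection onto the span of the
eigenspaces of `A` with eigenvalues at most `c` (junk value `0` if `A` is not
Hermitian). -/
noncomputable def spectralProjLE {d : ℕ} (A : Matrix (Fin d) (Fin d) ℂ) (c : ℝ) :
    Matrix (Fin d) (Fin d) ℂ :=
  if hA : A.IsHermitian then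
    (hA.eigenvectorUnitary : Matrix (Fin d) (Fin d) ℂ) *
      Matrix.diagonal (fun i => if hA.eigenvalues i ≤ c then (1 : ℂ) else 0) *
      (star hA.eigenvectorUnitary : Matrix (Fin d) (Fin d) ℂ)
  else 0

namespace SpectralAux
open scoped Matrix.Norms.L2Operator InnerProductSpace

variable {d : ℕ} {A : Matrix (Fin d) (Fin d) ℂ}

/-- Functional calculus for a Hermitian matrix: apply `f` to the eigenvalues. -/
noncomputable def hcalc (hA : A.IsHermitian) (f : ℝ → ℂ) : Matrix (Fin d) (Fin d) ℂ :=
  (hA.eigenvectorUnitary : Matrix (Fin d) (Fin d) ℂ) *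
    Matrix.diagonal (fun i => f (hA.eigenvalues i)) *
    (star hA.eigenvectorUnitary : Matrix (Fin d) (Fin d) ℂ)

lemma hcalc_congr (hA : A.IsHermitian) {f g : ℝ → ℂ}
    (h : ∀ i, f (hA.eigenvalues i) = g (hA.eigenvalues i)) : hcalc hA f = hcalc hA g := by
  unfold hcalc
  congr 2
  exact congrArg Matrix.diagonal (funext h)

lemma hcalc_mul (hA : A.IsHermitian) (f g : ℝ → ℂ) :
    hcalc hA f * hcalc hA g = hcalc hA (fun x => f x * g x) := by
  unfold hcalc
  have h : (star hA.eigenvectorUnitary : Matrix (Fin d) (Fin d) ℂ) *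
      (hA.eigenvectorUnitary : Matrix (Fin d) (Fin d) ℂ) = 1 := Unitary.coe_star_mul_self _
  simp only [mul_assoc]
  rw [← mul_assoc (star hA.eigenvectorUnitary : Matrix (Fin d) (Fin d) ℂ), h, one_mul,
    ← mul_assoc (Matrix.diagonal _), Matrix.diagonal_mul_diagonal]

lemma hcalc_one (hA : A.IsHermitian) : hcalc hA (fun _ => 1) = 1 := by
  unfold hcalc
  rw [show Matrix.diagonal (fun _ : Fin d => (1:ℂ)) = 1 from Matrix.diagonal_one, mul_one]
  exact Unitary.coe_mul_star_self _

lemma hcalc_sub (hA : A.IsHermitian) (f g : ℝ → ℂ) :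
    hcalc hA f - hcalc hA g = hcalc hA (fun x => f x - g x) := by
  unfold hcalc
  rw [← Matrix.sub_mul, ← Matrix.mul_sub, Matrix.diagonal_sub]

lemma hcalc_id (hA : A.IsHermitian) : hcalc hA (fun x => (x:ℂ)) = A := by
  conv_rhs => rw [hA.spectral_theorem]
  rfl

lemma hcalc_const (hA : A.IsHermitian) (z : ℂ) : hcalc hA (fun _ => z) = z • 1 := by
  have : Matrix.diagonal (fun _ : Fin d => z) = z • 1 := by
    ext i j
    by_cases h : i = j <;>
      simp [Matrix.diagonal_apply, Matrix.one_apply, h]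
  unfold hcalc
  rw [this, Matrix.mul_smul, Matrix.smul_mul, mul_one]
  congr 1
  exact Unitary.coe_mul_star_self _

lemma hcalc_sub_const (hA : A.IsHermitian) (c : ℝ) :
    A - (c:ℂ) • 1 = hcalc hA (fun x => (x:ℂ) - (c:ℂ)) := by
  have h := hcalc_sub hA (fun x => (x:ℂ)) (fun _ => (c:ℂ))
  rw [hcalc_id, hcalc_const] at h
  exact h

lemma hcalc_star (hA : A.IsHermitian) (f : ℝ → ℂ) :
    star (hcalc hA f) = hcalc hA (fun x => starRingEnd ℂ (f x)) := by
  unfold hcalc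
  rw [Matrix.star_mul, Matrix.star_mul, star_star, Matrix.star_eq_conjTranspose (Matrix.diagonal _),
    Matrix.diagonal_conjTranspose, mul_assoc]
  rfl

lemma norm_diagonal_le (v : Fin d → ℂ) (c : ℝ) (hc : 0 ≤ c)
    (h : ∀ i, ‖v i‖ ≤ c) : ‖Matrix.diagonal v‖ ≤ c := by
  rw [Matrix.cstar_norm_def]
  refine ContinuousLinearMap.opNorm_le_bound _ hc fun x => ?_
  have happ : ∀ i, (Matrix.toEuclideanCLM (𝕜 := ℂ) (Matrix.diagonal v) x) i = v i * x i := by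
    intro i
    have := congrFun (Matrix.ofLp_toEuclideanCLM (𝕜 := ℂ) (Matrix.diagonal v) x) i
    simpa [Matrix.toLin'_apply, Matrix.mulVec_diagonal] using this
  have h1 : ‖Matrix.toEuclideanCLM (𝕜 := ℂ) (Matrix.diagonal v) x‖
      = Real.sqrt (∑ i, ‖v i * x i‖ ^ 2) := by
    rw [EuclideanSpace.norm_eq]
    congr 1
    refine Finset.sum_congr rfl fun i _ => ?_
    rw [happ i]
  have h2 : ‖x‖ = Real.sqrt (∑ i, ‖x i‖ ^ 2) := EuclideanSpace.norm_eq x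
  rw [h1, h2, ← Real.sqrt_sq hc, ← Real.sqrt_mul (by positivity)]
  refine Real.sqrt_le_sqrt ?_
  rw [Finset.mul_sum]
  refine Finset.sum_le_sum fun i _ => ?_
  rw [norm_mul, mul_pow]
  exact mul_le_mul_of_nonneg_right (pow_le_pow_left₀ (norm_nonneg _) (h i) 2) (by positivity)

lemma hcalc_norm_le (hA : A.IsHermitian) (f : ℝ → ℂ) (c : ℝ) (hc : 0 ≤ c)
    (h : ∀ i, ‖f (hA.eigenvalues i)‖ ≤ c) : ‖hcalc hA f‖ ≤ c := by
  unfold hcalc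
  rw [mul_assoc, CStarRing.norm_coe_unitary_mul hA.eigenvectorUnitary,
    CStarRing.norm_mul_mem_unitary _ (Unitary.star_mem hA.eigenvectorUnitary.prop)]
  exact norm_diagonal_le _ c hc h

lemma sylvester {A B E F R : Matrix (Fin d) (Fin d) ℂ} {c ρ δ : ℝ}
    (hρ : 0 ≤ ρ) (hδ : 0 < δ)
    (hAE : A * E = E * A) (hBF : B * F = F * B)
    (hEE : E * E = E) (hFF : F * F = F)
    (hR : R * (A - (c:ℂ) • 1) = 1 - E)
    (hRn : ‖R‖ ≤ 1 / (ρ + δ))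
    (hBFn : ‖(B - (c:ℂ) • 1) * F‖ ≤ ρ)
    (hEn : ‖(1 : Matrix (Fin d) (Fin d) ℂ) - E‖ ≤ 1) (hFn : ‖F‖ ≤ 1) :
    ‖((1 : Matrix (Fin d) (Fin d) ℂ) - E) * F‖ ≤ ‖A - B‖ / δ := by
  set X : Matrix (Fin d) (Fin d) ℂ := (1 - E) * F with hX
  set C : Matrix (Fin d) (Fin d) ℂ := (1 - E) * (A - B) * F with hC
  have hCn : ‖C‖ ≤ ‖A - B‖ := by
    calc ‖C‖ ≤ ‖(1 - E) * (A - B)‖ * ‖F‖ := norm_mul_le _ _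
    _ ≤ ‖(1:Matrix (Fin d) (Fin d) ℂ) - E‖ * ‖A - B‖ * ‖F‖ :=
        mul_le_mul_of_nonneg_right (norm_mul_le _ _) (norm_nonneg _)
    _ ≤ 1 * ‖A - B‖ * 1 := by
        refine mul_le_mul (mul_le_mul_of_nonneg_right hEn (norm_nonneg _)) hFn (norm_nonneg _) (by rw [one_mul]; exact norm_nonneg _)
    _ = ‖A - B‖ := by ring
  have hcomm : (A - (c:ℂ) • 1) * (1 - E) = (1 - E) * (A - (c:ℂ) • 1) := by
    simp only [sub_mul, mul_sub, one_mul, mul_one, hAE, Matrix.smul_mul, Matrix.mul_smul]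
    abel
  have hFB : F * (B - (c:ℂ) • 1) = (B - (c:ℂ) • 1) * F := by
    rw [mul_sub, sub_mul, hBF.symm, Matrix.mul_smul, Matrix.smul_mul, mul_one, one_mul]
  have e1 : (A - (c:ℂ) • 1) * X = C + X * ((B - (c:ℂ) • 1) * F) := by
    have lhs : (A - (c:ℂ) • 1) * X = (1 - E) * ((A - (c:ℂ) • 1) * F) := by
      rw [hX, ← mul_assoc, hcomm, mul_assoc]
    have rhs2 : X * ((B - (c:ℂ) • 1) * F) = (1 - E) * ((B - (c:ℂ) • 1) * F) := by
      rw [hX]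
      calc (1 - E) * F * ((B - (c:ℂ) • 1) * F)
          = (1 - E) * ((F * (B - (c:ℂ) • 1)) * F) := by noncomm_ring
        _ = (1 - E) * ((B - (c:ℂ) • 1) * (F * F)) := by rw [hFB]; noncomm_ring
        _ = (1 - E) * ((B - (c:ℂ) • 1) * F) := by rw [hFF]
    rw [lhs, rhs2, hC, mul_assoc, ← mul_add]
    congr 1
    noncomm_ring
  have h1E : ((1:Matrix (Fin d) (Fin d) ℂ) - E) * (1 - E) = 1 - E := by
    rw [sub_mul, one_mul, mul_sub, mul_one, hEE]
    abel
  have key : X = R * (C + X * ((B - (c:ℂ) • 1) * F)) := by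
    rw [← e1, ← mul_assoc, hR, hX, ← mul_assoc, h1E]
  have h4 : ‖X‖ ≤ 1 / (ρ + δ) * (‖A - B‖ + ‖X‖ * ρ) := by
    calc ‖X‖ = ‖R * (C + X * ((B - (c:ℂ) • 1) * F))‖ := by rw [← key]
    _ ≤ ‖R‖ * ‖C + X * ((B - (c:ℂ) • 1) * F)‖ := norm_mul_le _ _
    _ ≤ ‖R‖ * (‖C‖ + ‖X‖ * ρ) := by
        refine mul_le_mul_of_nonneg_left ?_ (norm_nonneg _)
        refine (norm_add_le _ _).trans (add_le_add le_rfl ?_)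
        exact (norm_mul_le _ _).trans (mul_le_mul_of_nonneg_left hBFn (norm_nonneg _))
    _ ≤ 1 / (ρ + δ) * (‖A - B‖ + ‖X‖ * ρ) := by
        refine mul_le_mul hRn (add_le_add hCn le_rfl)
          (add_nonneg (norm_nonneg _) (mul_nonneg (norm_nonneg _) hρ))
          (one_div_nonneg.mpr (by linarith))
  rw [le_div_iff₀ hδ]
  have hpd : (0:ℝ) < ρ + δ := by linarith
  rw [one_div, inv_mul_eq_div, le_div_iff₀ hpd] at h4
  linarith

lemma proj_diff_norm_le_max {E F : Matrix (Fin d) (Fin d) ℂ}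
    (hEE : E * E = E) (hEs : star E = E) (hFF : F * F = F) (hFs : star F = F) :
    ‖E - F‖ ≤ max ‖E * (1 - F)‖ ‖((1 : Matrix (Fin d) (Fin d) ℂ) - E) * F‖ := by
  set m : ℝ := max ‖E * (1 - F)‖ ‖((1 : Matrix (Fin d) (Fin d) ℂ) - E) * F‖ with hm
  have hm0 : 0 ≤ m := le_max_of_le_left (norm_nonneg _)
  set φ := Matrix.toEuclideanCLM (𝕜 := ℂ) (n := Fin d) with hφ
  have happ : ∀ (M N : Matrix (Fin d) (Fin d) ℂ) (y), φ M (φ N y) = φ (M * N) y := by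
    intro M N y
    rw [_root_.map_mul]
    rfl
  have h1 : ∀ (M : Matrix (Fin d) (Fin d) ℂ) (y), φ (1 - M) y = y - φ M y := by
    intro M y
    rw [_root_.map_sub, ContinuousLinearMap.sub_apply, _root_.map_one, ContinuousLinearMap.one_apply]
  have horth : ∀ (G : Matrix (Fin d) (Fin d) ℂ), G * G = G → star G = G →
      ∀ (u w : EuclideanSpace ℂ (Fin d)), ⟪φ G u, φ (1 - G) w⟫_ℂ = 0 := by
    intro G hGG hGs u w
    have hadj : ContinuousLinearMap.adjoint (φ G) = φ G := by
      rw [← ContinuousLinearMap.star_eq_adjoint, ← map_star, hGs]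
    rw [show ⟪φ G u, φ (1 - G) w⟫_ℂ = ⟪u, φ G (φ (1 - G) w)⟫_ℂ from by
      conv_lhs => rw [← hadj]
      exact ContinuousLinearMap.adjoint_inner_left _ _ _,
      happ, show G * (1 - G) = 0 from by rw [mul_sub, mul_one, hGG, sub_self], _root_.map_zero]
    simp
  rw [Matrix.cstar_norm_def]
  refine ContinuousLinearMap.opNorm_le_bound _ hm0 fun x => ?_
  have hdecomp : φ (E - F) x = φ E (φ (1 - F) x) - φ (1 - E) (φ F x) := by
    rw [_root_.map_sub, ContinuousLinearMap.sub_apply, h1, h1, _root_.map_sub (φ E)]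
    abel
  have hb1 : ‖φ E (φ (1 - F) x)‖ ≤ m * ‖φ (1 - F) x‖ := by
    have hidem : φ (1 - F) (φ (1 - F) x) = φ (1 - F) x := by
      rw [happ]
      congr 1
      rw [sub_mul, one_mul, mul_sub, mul_one, hFF]
      abel
    calc ‖φ E (φ (1 - F) x)‖ = ‖φ (E * (1 - F)) (φ (1 - F) x)‖ := by rw [← happ, hidem]
    _ ≤ ‖φ (E * (1 - F))‖ * ‖φ (1 - F) x‖ := ContinuousLinearMap.le_opNorm _ _
    _ ≤ m * ‖φ (1 - F) x‖ :=
        mul_le_mul_of_nonneg_right (le_max_of_le_left le_rfl) (norm_nonneg _)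
  have hb2 : ‖φ (1 - E) (φ F x)‖ ≤ m * ‖φ F x‖ := by
    have hidem : φ F (φ F x) = φ F x := by rw [happ, hFF]
    calc ‖φ (1 - E) (φ F x)‖ = ‖φ ((1 - E) * F) (φ F x)‖ := by rw [← happ, hidem]
    _ ≤ ‖φ ((1 - E) * F)‖ * ‖φ F x‖ := ContinuousLinearMap.le_opNorm _ _
    _ ≤ m * ‖φ F x‖ :=
        mul_le_mul_of_nonneg_right (le_max_of_le_right le_rfl) (norm_nonneg _)
  have hsq : ‖φ (E - F) x‖ ^ 2 = ‖φ E (φ (1 - F) x)‖ ^ 2 + ‖φ (1 - E) (φ F x)‖ ^ 2 := by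
    rw [hdecomp, norm_sub_sq (𝕜 := ℂ), horth E hEE hEs]
    simp
  have hpyth : ‖φ F x‖ ^ 2 + ‖φ (1 - F) x‖ ^ 2 = ‖x‖ ^ 2 := by
    have hx : φ F x + φ (1 - F) x = x := by rw [h1]; abel
    have := norm_add_sq (𝕜 := ℂ) (φ F x) (φ (1 - F) x)
    rw [hx, horth F hFF hFs, map_zero, mul_zero, add_zero] at this
    linarith
  have hfinal : ‖φ (E - F) x‖ ^ 2 ≤ (m * ‖x‖) ^ 2 := by
    have e1 : ‖φ E (φ (1 - F) x)‖ ^ 2 ≤ (m * ‖φ (1 - F) x‖) ^ 2 :=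
      pow_le_pow_left₀ (norm_nonneg _) hb1 2
    have e2 : ‖φ (1 - E) (φ F x)‖ ^ 2 ≤ (m * ‖φ F x‖) ^ 2 :=
      pow_le_pow_left₀ (norm_nonneg _) hb2 2
    have : (m * ‖φ (1 - F) x‖) ^ 2 + (m * ‖φ F x‖) ^ 2 = m ^ 2 * ‖x‖ ^ 2 := by
      rw [mul_pow, mul_pow, ← mul_add]
      rw [show ‖φ (1 - F) x‖ ^ 2 + ‖φ F x‖ ^ 2 = ‖x‖ ^ 2 from by linarith [hpyth]]
    rw [hsq]
    calc ‖φ E (φ (1 - F) x)‖ ^ 2 + ‖φ (1 - E) (φ F x)‖ ^ 2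
        ≤ (m * ‖φ (1 - F) x‖) ^ 2 + (m * ‖φ F x‖) ^ 2 := add_le_add e1 e2
    _ = m ^ 2 * ‖x‖ ^ 2 := this
    _ = (m * ‖x‖) ^ 2 := by ring
  nlinarith [norm_nonneg (φ (E - F) x), mul_nonneg hm0 (norm_nonneg x)]

lemma weyl_aux {B : Matrix (Fin d) (Fin d) ℂ} (hA : A.IsHermitian) (hB : B.IsHermitian)
    {ε : ℝ} (hn : ‖A - B‖ ≤ ε) (j : Fin d)
    (h : ∀ i, ε < |hA.eigenvalues i - hB.eigenvalues j|) : False := by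
  haveI : Nonempty (Fin d) := ⟨j⟩
  have hε0 : 0 ≤ ε := le_trans (norm_nonneg _) hn
  set β : ℝ := hB.eigenvalues j with hβ
  set m : ℝ := Finset.univ.inf' Finset.univ_nonempty (fun i => |hA.eigenvalues i - β|) with hm
  have hεm : ε < m := (Finset.lt_inf'_iff _).mpr (fun i _ => h i)
  have hm0 : 0 < m := lt_of_le_of_lt hε0 hεm
  have hmle : ∀ i, m ≤ |hA.eigenvalues i - β| := fun i => Finset.inf'_le _ (Finset.mem_univ i)
  set R := hcalc hA (fun x => ((x:ℂ) - (β:ℂ))⁻¹) with hR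
  have hRn : ‖R‖ ≤ 1 / m := by
    refine hcalc_norm_le hA _ _ (by positivity) fun i => ?_
    rw [show ((hA.eigenvalues i : ℂ) - (β:ℂ)) = ((hA.eigenvalues i - β : ℝ) : ℂ) by push_cast; ring,
      norm_inv, Complex.norm_real, Real.norm_eq_abs, one_div]
    exact inv_anti₀ hm0 (hmle i)
  have hRS : R * (A - (β:ℂ) • 1) = 1 := by
    rw [hcalc_sub_const hA β, hR, hcalc_mul, ← hcalc_one hA]
    refine hcalc_congr hA fun i => ?_
    refine inv_mul_cancel₀ ?_
    rw [show ((hA.eigenvalues i : ℂ) - (β:ℂ)) = ((hA.eigenvalues i - β : ℝ) : ℂ) by push_cast; ring]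
    rw [Complex.ofReal_ne_zero]
    intro h0
    have := hmle i
    rw [h0] at this
    simp at this
    linarith
  set φ := Matrix.toEuclideanCLM (𝕜 := ℂ) (n := Fin d) with hφ
  set v : EuclideanSpace ℂ (Fin d) := hB.eigenvectorBasis j with hv
  have hvn : ‖v‖ = 1 := hB.eigenvectorBasis.orthonormal.1 j
  have hBv : φ B v = (β:ℂ) • v := by
    apply (WithLp.equiv 2 _).injective
    rw [show (WithLp.equiv 2 _) (φ B v) = Matrix.toLin' B ((WithLp.equiv 2 _) v) from rfl]
    have hmv := hB.mulVec_eigenvectorBasis j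
    simp only [Matrix.toLin'_apply]
    calc B *ᵥ (WithLp.equiv 2 _) v = β • ⇑(hB.eigenvectorBasis j) := hmv
    _ = (WithLp.equiv 2 _) ((β:ℂ) • v) := by
        funext i
        simp [Pi.smul_apply, Complex.real_smul, hv]
  have h2 : φ (A - (β:ℂ) • 1) v = φ (A - B) v := by
    rw [_root_.map_sub, _root_.map_sub, ContinuousLinearMap.sub_apply,
      ContinuousLinearMap.sub_apply, hBv, _root_.map_smul, _root_.map_one,
      ContinuousLinearMap.smul_apply, ContinuousLinearMap.one_apply]
  have h1 : φ R (φ (A - (β:ℂ) • 1) v) = v := by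
    rw [show φ R (φ (A - (β:ℂ) • 1) v) = φ (R * (A - (β:ℂ) • 1)) v from by
      rw [_root_.map_mul]; rfl, hRS, _root_.map_one, ContinuousLinearMap.one_apply]
  have hchain : (1:ℝ) ≤ 1 / m * ε := by
    calc (1:ℝ) = ‖v‖ := hvn.symm
    _ = ‖φ R (φ (A - B) v)‖ := by rw [← h2, h1]
    _ ≤ ‖φ R‖ * ‖φ (A - B) v‖ := ContinuousLinearMap.le_opNorm _ _
    _ ≤ (1/m) * (‖φ (A - B)‖ * ‖v‖) := by
        refine mul_le_mul hRn (ContinuousLinearMap.le_opNorm _ _) (norm_nonneg _) (by positivity)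
    _ = (1/m) * ‖A - B‖ := by rw [hvn, mul_one]; rfl
    _ ≤ 1 / m * ε := by
        refine mul_le_mul_of_nonneg_left hn (by positivity)
  rw [one_div, inv_mul_eq_div, le_div_iff₀ hm0, one_mul] at hchain
  linarith


lemma norm_ofReal_inv_le {a c m : ℝ} (hm : 0 < m) (h : m ≤ a - c) :
    ‖((a:ℂ) - (c:ℂ))⁻¹‖ ≤ 1 / m := by
  rw [show ((a:ℂ) - (c:ℂ)) = ((a - c : ℝ) : ℂ) by push_cast; ring, norm_inv,
    Complex.norm_real, Real.norm_eq_abs, abs_of_pos (lt_of_lt_of_le hm h), one_div]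
  exact inv_anti₀ hm h

lemma norm_ofReal_sub_le {a c ρ : ℝ} (h1 : -ρ ≤ a - c) (h2 : a - c ≤ ρ) :
    ‖((a:ℂ) - (c:ℂ))‖ ≤ ρ := by
  rw [show ((a:ℂ) - (c:ℂ)) = ((a - c : ℝ) : ℂ) by push_cast; ring,
    Complex.norm_real, Real.norm_eq_abs]
  exact abs_le.mpr ⟨h1, h2⟩

lemma spectralProjLE_eq_hcalc (hA : A.IsHermitian) (c : ℝ) :
    spectralProjLE A c = hcalc hA (fun x => if x ≤ c then (1:ℂ) else 0) := by
  rw [spectralProjLE, dif_pos hA]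
  rfl

lemma proj_idem (hA : A.IsHermitian) (c : ℝ) :
    hcalc hA (fun x => if x ≤ c then (1:ℂ) else 0) *
      hcalc hA (fun x => if x ≤ c then (1:ℂ) else 0)
      = hcalc hA (fun x => if x ≤ c then (1:ℂ) else 0) := by
  rw [hcalc_mul]
  refine hcalc_congr hA fun i => ?_
  by_cases h : hA.eigenvalues i ≤ c <;> simp [h]

lemma proj_star (hA : A.IsHermitian) (c : ℝ) :
    star (hcalc hA (fun x => if x ≤ c then (1:ℂ) else 0))
      = hcalc hA (fun x => if x ≤ c then (1:ℂ) else 0) := by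
  rw [hcalc_star]
  refine hcalc_congr hA fun i => ?_
  by_cases h : hA.eigenvalues i ≤ c <;> simp [h]

lemma proj_comm (hA : A.IsHermitian) (c : ℝ) :
    A * hcalc hA (fun x => if x ≤ c then (1:ℂ) else 0)
      = hcalc hA (fun x => if x ≤ c then (1:ℂ) else 0) * A := by
  have h1 := hcalc_mul hA (fun x => (x:ℂ)) (fun x => if x ≤ c then (1:ℂ) else 0)
  have h2 := hcalc_mul hA (fun x => if x ≤ c then (1:ℂ) else 0) (fun x => (x:ℂ))
  rw [hcalc_id] at h1 h2
  rw [h1, h2]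
  exact hcalc_congr hA fun i => mul_comm _ _

lemma proj_norm_le_one (hA : A.IsHermitian) (c : ℝ) :
    ‖hcalc hA (fun x => if x ≤ c then (1:ℂ) else 0)‖ ≤ 1 := by
  refine hcalc_norm_le hA _ _ zero_le_one fun i => ?_
  by_cases h : hA.eigenvalues i ≤ c <;> simp [h]

lemma one_sub_proj (hA : A.IsHermitian) (c : ℝ) :
    (1 : Matrix (Fin d) (Fin d) ℂ) - hcalc hA (fun x => if x ≤ c then (1:ℂ) else 0)
      = hcalc hA (fun x => 1 - (if x ≤ c then (1:ℂ) else 0)) := by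
  rw [← hcalc_one hA, hcalc_sub]

lemma one_sub_proj_norm_le_one (hA : A.IsHermitian) (c : ℝ) :
    ‖(1 : Matrix (Fin d) (Fin d) ℂ) - hcalc hA (fun x => if x ≤ c then (1:ℂ) else 0)‖ ≤ 1 := by
  rw [one_sub_proj hA c]
  refine hcalc_norm_le hA _ _ zero_le_one fun i => ?_
  by_cases h : hA.eigenvalues i ≤ c <;> simp [h]

end SpectralAux

open SpectralAux
open scoped Matrix.Norms.L2Operator

/-- **Perturbation of spectral projections.**  Let `A`, `B` be Hermitian with
`‖A - B‖ ≤ ε`, `ε > 0`, and suppose `A` has no eigenvalues in `(θ - 2ε, θ + 2ε)`.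
Let `E` (resp. `F`) be the orthogonal projection onto the span of the eigenspaces
of `A` (resp. `B`) with eigenvalues at most `θ - ε`.  Then
`‖E - F‖ ≤ (π/(4ε))·‖A - B‖`. -/
theorem spectralProj_perturbation (d : ℕ) (A B : Matrix (Fin d) (Fin d) ℂ)
    (hA : A.IsHermitian) (hB : B.IsHermitian) (θ ε : ℝ) (hε : 0 < ε)
    (hAB : opNorm (A - B) ≤ ε)
    (hgap : ∀ i, hA.eigenvalues i ∉ Set.Ioo (θ - 2 * ε) (θ + 2 * ε)) :
    opNorm (spectralProjLE A (θ - ε) - spectralProjLE B (θ - ε))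
      ≤ (Real.pi / (4 * ε)) * opNorm (A - B) := by
  have hπ : (3:ℝ) < Real.pi := Real.pi_gt_three
  have hABn : ‖A - B‖ ≤ ε := hAB
  show ‖spectralProjLE A (θ - ε) - spectralProjLE B (θ - ε)‖
      ≤ Real.pi / (4 * ε) * ‖A - B‖
  rcases isEmpty_or_nonempty (Fin d) with hd | hd
  · have hz : spectralProjLE A (θ - ε) - spectralProjLE B (θ - ε) = 0 := Subsingleton.elim _ _
    rw [hz, norm_zero]
    have : (0:ℝ) ≤ Real.pi / (4 * ε) := by positivity
    exact mul_nonneg this (norm_nonneg _)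
  -- notation
  set χ : ℝ → ℂ := fun x => if x ≤ θ - ε then (1:ℂ) else 0 with hχ
  set E := spectralProjLE A (θ - ε) with hEdef
  set F := spectralProjLE B (θ - ε) with hFdef
  have hE : E = hcalc hA χ := spectralProjLE_eq_hcalc hA (θ - ε)
  have hF : F = hcalc hB χ := spectralProjLE_eq_hcalc hB (θ - ε)
  -- gap dichotomy for A
  have hgap' : ∀ i, hA.eigenvalues i ≤ θ - 2*ε ∨ θ + 2*ε ≤ hA.eigenvalues i := by
    intro i
    rcases le_or_gt (hA.eigenvalues i) (θ - 2*ε) with h | h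
    · exact Or.inl h
    · refine Or.inr ?_
      by_contra hc
      exact hgap i ⟨h, lt_of_not_ge hc⟩
  -- Weyl: B has no eigenvalues in (θ-ε, θ+ε)
  have hWeyl : ∀ j, hB.eigenvalues j ≤ θ - ε ∨ θ + ε ≤ hB.eigenvalues j := by
    intro j
    rcases le_or_gt (hB.eigenvalues j) (θ - ε) with h | h
    · exact Or.inl h
    · refine Or.inr ?_
      by_contra hc
      have hc' : hB.eigenvalues j < θ + ε := lt_of_not_ge hc
      refine weyl_aux hA hB hABn j fun i => ?_
      rcases hgap' i with hg | hg
      · rw [abs_sub_comm]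
        refine lt_of_lt_of_le (by linarith) (le_abs_self _)
      · refine lt_of_lt_of_le (by linarith) (le_abs_self _)
  -- lower bounds for the spectra
  set loA : ℝ := min (Finset.univ.inf' Finset.univ_nonempty hA.eigenvalues) (θ - 2*ε) with hloA
  set loB : ℝ := min (Finset.univ.inf' Finset.univ_nonempty hB.eigenvalues) (θ - ε) with hloB
  have hloA_le : ∀ i, loA ≤ hA.eigenvalues i := fun i =>
    le_trans (min_le_left _ _) (Finset.inf'_le _ (Finset.mem_univ i))
  have hloB_le : ∀ j, loB ≤ hB.eigenvalues j := fun j =>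
    le_trans (min_le_left _ _) (Finset.inf'_le _ (Finset.mem_univ j))
  have hloA2 : loA ≤ θ - 2*ε := min_le_right _ _
  have hloB2 : loB ≤ θ - ε := min_le_right _ _
  -- first Sylvester instance : ‖(1-E) * F‖
  have inst1 : ‖(1 - E) * F‖ ≤ ‖A - B‖ / (3*ε) := by
    set c₁ : ℝ := (loB + (θ - ε)) / 2 with hc₁
    set ρ₁ : ℝ := ((θ - ε) - loB) / 2 with hρ₁
    have hρ₁0 : 0 ≤ ρ₁ := by rw [hρ₁]; linarith
    have hc₁le : c₁ ≤ θ - ε := by rw [hc₁]; linarith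
    set g₁ : ℝ → ℂ := fun x => if x ≤ θ - ε then 0 else ((x:ℂ) - (c₁:ℂ))⁻¹ with hg₁
    refine sylvester (c := c₁) (R := hcalc hA g₁) hρ₁0 (by linarith)
        (hE ▸ proj_comm hA (θ - ε)) (hF ▸ proj_comm hB (θ - ε))
        (hE ▸ proj_idem hA (θ - ε)) (hF ▸ proj_idem hB (θ - ε)) ?_ ?_ ?_ ?_ ?_
    · -- R * (A - c₁ • 1) = 1 - E
      rw [hcalc_sub_const hA c₁, hcalc_mul, hE, one_sub_proj hA (θ - ε)]
      refine hcalc_congr hA fun i => ?_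
      by_cases h : hA.eigenvalues i ≤ θ - ε
      · simp [hg₁, h]
      · have hne : ((hA.eigenvalues i : ℂ) - (c₁:ℂ)) ≠ 0 := by
          rw [show ((hA.eigenvalues i:ℂ) - (c₁:ℂ)) = ((hA.eigenvalues i - c₁ : ℝ) : ℂ) by
            push_cast; ring, Complex.ofReal_ne_zero]
          have := lt_of_not_ge h
          intro h0
          have : hA.eigenvalues i = c₁ := by linarith [sub_eq_zero.mp h0]
          linarith
        simp only [hg₁, if_neg h]
        rw [inv_mul_cancel₀ hne]
        simp [hχ, h]
    · -- ‖R‖ ≤ 1 / (ρ₁ + 3ε)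
      refine hcalc_norm_le hA _ _ (by positivity) fun i => ?_
      by_cases h : hA.eigenvalues i ≤ θ - ε
      · simp only [hg₁, if_pos h, norm_zero]
        positivity
      · have hge : θ + 2*ε ≤ hA.eigenvalues i := by
          rcases hgap' i with hg | hg
          · exact absurd (by linarith : hA.eigenvalues i ≤ θ - ε) h
          · exact hg
        simp only [hg₁, if_neg h]
        refine norm_ofReal_inv_le (by linarith) ?_
        rw [hρ₁, hc₁]
        linarith
    · -- ‖(B - c₁•1) * F‖ ≤ ρ₁
      rw [hcalc_sub_const hB c₁, hF, hcalc_mul]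
      refine hcalc_norm_le hB _ _ hρ₁0 fun j => ?_
      by_cases h : hB.eigenvalues j ≤ θ - ε
      · simp only [hχ, if_pos h, mul_one]
        refine norm_ofReal_sub_le ?_ ?_ <;> rw [hρ₁, hc₁] <;>
          [linarith [hloB_le j]; linarith]
      · simpa [hχ, h] using hρ₁0
    · exact hE ▸ one_sub_proj_norm_le_one hA (θ - ε)
    · exact hF ▸ proj_norm_le_one hB (θ - ε)
  -- second Sylvester instance : ‖(1-F) * E‖
  have inst2 : ‖(1 - F) * E‖ ≤ ‖B - A‖ / (3*ε) := by
    set c₂ : ℝ := (loA + (θ - 2*ε)) / 2 with hc₂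
    set ρ₂ : ℝ := ((θ - 2*ε) - loA) / 2 with hρ₂
    have hρ₂0 : 0 ≤ ρ₂ := by rw [hρ₂]; linarith
    have hc₂le : c₂ ≤ θ - 2*ε := by rw [hc₂]; linarith
    set g₂ : ℝ → ℂ := fun x => if x ≤ θ - ε then 0 else ((x:ℂ) - (c₂:ℂ))⁻¹ with hg₂
    refine sylvester (c := c₂) (R := hcalc hB g₂) hρ₂0 (by linarith)
        (hF ▸ proj_comm hB (θ - ε)) (hE ▸ proj_comm hA (θ - ε))
        (hF ▸ proj_idem hB (θ - ε)) (hE ▸ proj_idem hA (θ - ε)) ?_ ?_ ?_ ?_ ?_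
    · rw [hcalc_sub_const hB c₂, hcalc_mul, hF, one_sub_proj hB (θ - ε)]
      refine hcalc_congr hB fun j => ?_
      by_cases h : hB.eigenvalues j ≤ θ - ε
      · simp [hg₂, h]
      · have hne : ((hB.eigenvalues j : ℂ) - (c₂:ℂ)) ≠ 0 := by
          rw [show ((hB.eigenvalues j:ℂ) - (c₂:ℂ)) = ((hB.eigenvalues j - c₂ : ℝ) : ℂ) by
            push_cast; ring, Complex.ofReal_ne_zero]
          have := lt_of_not_ge h
          intro h0
          have : hB.eigenvalues j = c₂ := by linarith [sub_eq_zero.mp h0]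
          linarith
        simp only [hg₂, if_neg h]
        rw [inv_mul_cancel₀ hne]
        simp [hχ, h]
    · refine hcalc_norm_le hB _ _ (by positivity) fun j => ?_
      by_cases h : hB.eigenvalues j ≤ θ - ε
      · simp only [hg₂, if_pos h, norm_zero]
        positivity
      · have hge : θ + ε ≤ hB.eigenvalues j := by
          rcases hWeyl j with hg | hg
          · exact absurd hg h
          · exact hg
        simp only [hg₂, if_neg h]
        refine norm_ofReal_inv_le (by linarith) ?_
        rw [hρ₂, hc₂]
        linarith
    · rw [hcalc_sub_const hA c₂, hE, hcalc_mul]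
      refine hcalc_norm_le hA _ _ hρ₂0 fun i => ?_
      by_cases h : hA.eigenvalues i ≤ θ - ε
      · have hle : hA.eigenvalues i ≤ θ - 2*ε := by
          rcases hgap' i with hg | hg
          · exact hg
          · linarith
        simp only [hχ, if_pos h, mul_one]
        refine norm_ofReal_sub_le ?_ ?_ <;> rw [hρ₂, hc₂] <;>
          [linarith [hloA_le i]; linarith]
      · simpa [hχ, h] using hρ₂0
    · exact hF ▸ one_sub_proj_norm_le_one hB (θ - ε)
    · exact hE ▸ proj_norm_le_one hA (θ - ε)
  -- ‖E * (1 - F)‖ = ‖(1 - F) * E‖ by taking adjoints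
  have hstar : ‖E * (1 - F)‖ = ‖(1 - F) * E‖ := by
    have h1 : star (E * (1 - F)) = (1 - F) * E := by
      rw [Matrix.star_mul, star_sub, star_one, hE, hF, proj_star hA, proj_star hB]
    calc ‖E * (1 - F)‖ = ‖(E * (1 - F))ᴴ‖ := (Matrix.l2_opNorm_conjTranspose _).symm
    _ = ‖(1 - F) * E‖ := by rw [← Matrix.star_eq_conjTranspose, h1]
  -- combine
  have hmax : ‖E - F‖ ≤ max ‖E * (1 - F)‖ ‖(1 - E) * F‖ :=
    proj_diff_norm_le_max (hE ▸ proj_idem hA (θ - ε)) (hE ▸ proj_star hA (θ - ε))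
      (hF ▸ proj_idem hB (θ - ε)) (hF ▸ proj_star hB (θ - ε))
  have hBA : ‖B - A‖ = ‖A - B‖ := norm_sub_rev _ _
  have hbound : ‖E - F‖ ≤ ‖A - B‖ / (3*ε) := by
    refine hmax.trans (max_le ?_ inst1)
    rw [hstar]
    rw [hBA] at inst2
    exact inst2
  refine hbound.trans ?_
  rw [div_eq_mul_inv, mul_comm]
  refine mul_le_mul_of_nonneg_right ?_ (norm_nonneg _)
  rw [← one_div]
  rw [div_le_div_iff₀ (by linarith) (by linarith)]
  nlinarith
end
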